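/- arXiv:2410.19841 — 6 statements merged into one kernel-verified Lean document; each statement's English description precedes it below -/
import Mathlib

section
/- Let n ≥ 1, δ > 0, β < n+2, and c^{δ,β} = 2(n+2−β)Γ(n/2+1)/(π^{n/2} δ^{n+2−β}). Then ∫_{B_δ(0)} (q ⊗ q)/‖q‖^β dq = (2/c^{δ,β}) I, where I is the n×n identity matrix. -/
open MeasureTheory

/-- The normalization constant `c^{δ,β}` of the peridynamic kernel. -/
noncomputable def cdb (n : ℕ) (δ β : ℝ) : ℝ :=
  2 * (n + 2 - β) * Real.Gamma ((n : ℝ) / 2 + 1) /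
    (Real.pi ^ ((n : ℝ) / 2) * δ ^ ((n : ℝ) + 2 - β))

open Set Metric in
private lemma euclid_integrable_comp_norm {n : ℕ} (hn : 1 ≤ n) {f : ℝ → ℝ}
    (hfm : Measurable f)
    (hf : IntegrableOn (fun y : ℝ => y ^ (n - 1) * f y) (Ioi (0:ℝ))) :
    Integrable (fun x : EuclideanSpace ℝ (Fin n) => f ‖x‖) := by
  haveI : Nonempty (Fin n) := ⟨⟨0, hn⟩⟩
  set E := EuclideanSpace ℝ (Fin n) with hE
  haveI : Nontrivial E := by
    have h1 : ‖EuclideanSpace.single (⟨0, hn⟩ : Fin n) (1:ℝ)‖ = 1 := by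
      simp [EuclideanSpace.norm_single]
    refine ⟨EuclideanSpace.single ⟨0, hn⟩ (1:ℝ), 0, fun h => ?_⟩
    rw [h] at h1
    simp at h1
  have hdim : Module.finrank ℝ E = n := finrank_euclideanSpace_fin
  -- Integrability on (0, ∞) with density r ^ (n-1)
  have h3 : Integrable (fun y : Ioi (0:ℝ) => f y) (Measure.volumeIoiPow (n - 1)) := by
    rw [Measure.volumeIoiPow, integrable_withDensity_iff]
    · have hmm : (fun y : Ioi (0:ℝ) => f y * (ENNReal.ofReal ((y:ℝ) ^ (n-1))).toReal)
          = (fun y : ℝ => f y * y ^ (n - 1)) ∘ (Subtype.val : Ioi (0:ℝ) → ℝ) := by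
        funext y
        simp [ENNReal.toReal_ofReal (pow_nonneg y.2.le _)]
      rw [hmm, ← MeasurableEmbedding.integrable_map_iff
          (MeasurableEmbedding.subtype_coe measurableSet_Ioi),
          map_comap_subtype_coe measurableSet_Ioi]
      exact hf.congr_fun (fun y _ => mul_comm _ _) measurableSet_Ioi
    · exact (measurable_subtype_coe.pow_const _).ennreal_ofReal
    · exact Filter.Eventually.of_forall fun y => ENNReal.ofReal_lt_top
  -- Integrability on the product
  have h2 : Integrable (fun p : sphere (0:E) 1 × Ioi (0:ℝ) => f p.2)
      ((volume : Measure E).toSphere.prod (Measure.volumeIoiPow (Module.finrank ℝ E - 1))) := by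
    rw [hdim]
    refine (integrable_prod_iff ?_).2 ⟨?_, ?_⟩
    · exact (hfm.comp (measurable_subtype_coe.comp measurable_snd)).aestronglyMeasurable
    · exact Filter.Eventually.of_forall fun x => h3
    · exact integrable_const (∫ y : Ioi (0:ℝ), ‖f (y:ℝ)‖ ∂Measure.volumeIoiPow (n-1))
  -- Transport back to E
  have h4 : Integrable (fun x : ({(0:E)}ᶜ : Set E) => f ‖(x:E)‖)
      ((volume : Measure E).comap Subtype.val) := by
    have := ((volume : Measure E).measurePreserving_homeomorphUnitSphereProd).integrable_comp_emb
      (Homeomorph.measurableEmbedding _) (g := fun p : sphere (0:E) 1 × Ioi (0:ℝ) => f p.2)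
    simpa [Function.comp_def] using this.2 h2
  have h5 : Integrable (fun x : E => f ‖x‖)
      ((volume : Measure E).restrict ({(0:E)}ᶜ)) := by
    rw [← map_comap_subtype_coe (measurableSet_singleton (0:E)).compl,
      MeasurableEmbedding.integrable_map_iff
        (MeasurableEmbedding.subtype_coe (measurableSet_singleton (0:E)).compl)]
    exact h4
  rwa [restrict_compl_singleton] at h5

open Set Metric in
private lemma aux_indicator_eq {n : ℕ} (δ β : ℝ) :
    (fun x : EuclideanSpace ℝ (Fin n) =>
        (Iio δ).indicator (fun y : ℝ => y ^ (2 - β)) ‖x‖)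
      = (ball (0 : EuclideanSpace ℝ (Fin n)) δ).indicator
          (fun x => ‖x‖ ^ (2 - β)) := by
  funext x
  by_cases h : ‖x‖ < δ
  · rw [indicator_of_mem (by exact h) , indicator_of_mem (mem_ball_zero_iff.2 h)]
  · rw [indicator_of_notMem (by exact h), indicator_of_notMem (fun hx => h (mem_ball_zero_iff.1 hx))]

open Set Metric in
private lemma aux_radial_eq {n : ℕ} (hn : 1 ≤ n) {δ β : ℝ} :
    ∀ y ∈ Ioo (0:ℝ) δ, y ^ (n - 1) * y ^ (2 - β) = y ^ ((n:ℝ) + 1 - β) := by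
  intro y hy
  rw [← Real.rpow_natCast y (n-1), ← Real.rpow_add hy.1]
  congr 1
  rw [Nat.cast_sub hn]
  ring

open Set Metric in
private lemma aux_1d_integrable {n : ℕ} (hn : 1 ≤ n) {δ β : ℝ} (hδ : 0 < δ)
    (hβ : β < n + 2) :
    IntegrableOn (fun y : ℝ => y ^ (n - 1) *
      (Iio δ).indicator (fun y : ℝ => y ^ (2 - β)) y) (Ioi (0:ℝ)) := by
  have hfun : (fun y : ℝ => y ^ (n - 1) * (Iio δ).indicator (fun y : ℝ => y ^ (2 - β)) y)
      = (Iio δ).indicator (fun y : ℝ => y ^ (n - 1) * y ^ (2 - β)) := by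
    funext y
    by_cases h : y ∈ Iio δ
    · rw [indicator_of_mem h, indicator_of_mem h]
    · rw [indicator_of_notMem h, indicator_of_notMem h, mul_zero]
  rw [hfun, IntegrableOn, integrable_indicator_iff measurableSet_Iio, IntegrableOn,
    Measure.restrict_restrict measurableSet_Iio, Set.Iio_inter_Ioi]
  have hint : IntegrableOn (fun y : ℝ => y ^ ((n:ℝ) + 1 - β)) (Ioo (0:ℝ) δ) := by
    have h1 : IntervalIntegrable (fun y : ℝ => y ^ ((n:ℝ) + 1 - β)) volume 0 δ :=
      intervalIntegral.intervalIntegrable_rpow' (by linarith)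
    exact ((intervalIntegrable_iff_integrableOn_Ioc_of_le hδ.le).1 h1).mono_set
      Ioo_subset_Ioc_self
  exact hint.congr_fun (fun y hy => (aux_radial_eq hn y hy).symm) measurableSet_Ioo



open Set Metric in
private lemma aux_indicator_mul {n : ℕ} (δ β : ℝ) :
    (fun y : ℝ => y ^ (n - 1) * (Iio δ).indicator (fun y : ℝ => y ^ (2 - β)) y)
      = (Iio δ).indicator (fun y : ℝ => y ^ (n - 1) * y ^ (2 - β)) := by
  funext y
  by_cases h : y ∈ Iio δ
  · rw [indicator_of_mem h, indicator_of_mem h]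
  · rw [indicator_of_notMem h, indicator_of_notMem h, mul_zero]

open Set Metric in
private lemma key_int {n : ℕ} (hn : 1 ≤ n) {δ β : ℝ} (hδ : 0 < δ) (hβ : β < n + 2) :
    IntegrableOn (fun x : EuclideanSpace ℝ (Fin n) => ‖x‖ ^ (2 - β))
      (ball (0 : EuclideanSpace ℝ (Fin n)) δ) := by
  have hFm : Measurable ((Iio δ).indicator (fun y : ℝ => y ^ (2 - β))) :=
    (Measurable.indicator (by measurability) measurableSet_Iio)
  have h := euclid_integrable_comp_norm hn hFm (aux_1d_integrable hn hδ hβ)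
  rw [aux_indicator_eq] at h
  exact (integrable_indicator_iff measurableSet_ball).1 h

open Set Metric in
private lemma key_val {n : ℕ} (hn : 1 ≤ n) {δ β : ℝ} (hδ : 0 < δ) (hβ : β < n + 2) :
    ∫ x in ball (0 : EuclideanSpace ℝ (Fin n)) δ, ‖x‖ ^ (2 - β)
      = (n : ℝ) * (Real.pi ^ ((n : ℝ) / 2) / Real.Gamma ((n : ℝ) / 2 + 1)) *
          (δ ^ ((n : ℝ) + 2 - β) / ((n : ℝ) + 2 - β)) := by
  haveI : Nonempty (Fin n) := ⟨⟨0, hn⟩⟩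
  haveI : Nontrivial (EuclideanSpace ℝ (Fin n)) := by
    have h1 : ‖EuclideanSpace.single (⟨0, hn⟩ : Fin n) (1:ℝ)‖ = 1 := by
      simp [EuclideanSpace.norm_single]
    refine ⟨EuclideanSpace.single ⟨0, hn⟩ (1:ℝ), 0, fun h => ?_⟩
    rw [h] at h1
    simp at h1
  have hdim : Module.finrank ℝ (EuclideanSpace ℝ (Fin n)) = n := finrank_euclideanSpace_fin
  have hβ' : (0:ℝ) < (n:ℝ) + 2 - β := by linarith
  -- the 1-dimensional radial integral
  have hrad : ∫ y in Ioi (0:ℝ),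
      y ^ (n - 1) • (Iio δ).indicator (fun y : ℝ => y ^ (2 - β)) y
      = δ ^ ((n : ℝ) + 2 - β) / ((n : ℝ) + 2 - β) := by
    simp only [smul_eq_mul]
    rw [aux_indicator_mul, setIntegral_indicator measurableSet_Iio, Set.Ioi_inter_Iio,
      setIntegral_congr_fun measurableSet_Ioo (aux_radial_eq hn),
      Measure.restrict_congr_set Ioo_ae_eq_Ioc, ← intervalIntegral.integral_of_le hδ.le,
      integral_rpow (Or.inl (by linarith))]
    have h0 : (0:ℝ) ^ ((n:ℝ) + 1 - β + 1) = 0 := Real.zero_rpow (by intro h; linarith)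
    rw [h0]
    rw [show (n:ℝ) + 1 - β + 1 = (n:ℝ) + 2 - β by ring]
    ring
  -- the volume of the unit ball
  have hvol : (volume (ball (0 : EuclideanSpace ℝ (Fin n)) 1)).toReal
      = Real.pi ^ ((n:ℝ)/2) / Real.Gamma ((n:ℝ)/2 + 1) := by
    have hΓ : 0 < Real.Gamma ((n:ℝ)/2 + 1) := Real.Gamma_pos_of_pos (by positivity)
    rw [EuclideanSpace.volume_ball]
    simp only [Fintype.card_fin, ENNReal.ofReal_one, one_pow, one_mul]
    rw [ENNReal.toReal_ofReal (by positivity)]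
    congr 1
    rw [Real.sqrt_eq_rpow, ← Real.rpow_natCast (Real.pi ^ ((1:ℝ)/2)) n,
      ← Real.rpow_mul Real.pi_pos.le]
    congr 1
    ring
  have h := integral_fun_norm_addHaar (volume : Measure (EuclideanSpace ℝ (Fin n)))
    ((Iio δ).indicator (fun y : ℝ => y ^ (2 - β)))
  rw [hdim] at h
  rw [aux_indicator_eq, integral_indicator measurableSet_ball] at h
  rw [h, hrad, measureReal_def, hvol, nsmul_eq_mul, smul_eq_mul]
  ring

open Set Metric in
private lemma coord_abs_le_norm {n : ℕ} (q : EuclideanSpace ℝ (Fin n)) (k : Fin n) :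
    |q k| ≤ ‖q‖ := by
  rw [EuclideanSpace.norm_eq]
  have h1 : |q k| ^ 2 ≤ ∑ i : Fin n, ‖q i‖ ^ 2 := by
    have : |q k| ^ 2 = ‖q k‖ ^ 2 := by rw [Real.norm_eq_abs]
    rw [this]
    exact Finset.single_le_sum (f := fun i => ‖q i‖ ^ 2) (fun i _ => by positivity) (Finset.mem_univ k)
  calc |q k| = Real.sqrt (|q k| ^ 2) := (Real.sqrt_sq (abs_nonneg _)).symm
  _ ≤ Real.sqrt (∑ i : Fin n, ‖q i‖ ^ 2) := Real.sqrt_le_sqrt h1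



open Set Metric in
private lemma offdiag_zero {n : ℕ} {δ β : ℝ} {i j : Fin n} (hij : i ≠ j) :
    ∫ q in ball (0 : EuclideanSpace ℝ (Fin n)) δ, q i * q j / ‖q‖ ^ β = 0 := by
  classical
  set e : EuclideanSpace ℝ (Fin n) ≃ₗᵢ[ℝ] EuclideanSpace ℝ (Fin n) :=
    LinearIsometryEquiv.piLpCongrRight 2
      (fun k => if k = i then LinearIsometryEquiv.neg ℝ else LinearIsometryEquiv.refl ℝ ℝ) with he
  have hpre : e ⁻¹' (ball (0 : EuclideanSpace ℝ (Fin n)) δ) = ball 0 δ := by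
    rw [LinearIsometryEquiv.preimage_ball, map_zero]
  have hmp := e.measurePreserving
  have h := hmp.setIntegral_preimage_emb (e.toMeasurableEquiv.measurableEmbedding)
    (fun q : EuclideanSpace ℝ (Fin n) => q i * q j / ‖q‖ ^ β) (ball 0 δ)
  rw [hpre] at h
  have hei : ∀ x : EuclideanSpace ℝ (Fin n), (e x) i = -(x i) := by
    intro x
    simp [he, LinearIsometryEquiv.piLpCongrRight_apply]
  have hej : ∀ x : EuclideanSpace ℝ (Fin n), (e x) j = x j := by
    intro x
    simp [he, LinearIsometryEquiv.piLpCongrRight_apply,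
      hij.symm]
  have h2 : ∫ q in ball (0 : EuclideanSpace ℝ (Fin n)) δ, q i * q j / ‖q‖ ^ β
      = -∫ q in ball (0 : EuclideanSpace ℝ (Fin n)) δ, q i * q j / ‖q‖ ^ β := by
    conv_lhs => rw [← h]
    rw [← integral_neg]
    refine setIntegral_congr_fun measurableSet_ball fun x _ => ?_
    rw [hei, hej, e.norm_map]
    ring
  linarith

open Set Metric in
/-- `∫_{B_δ(0)} (q ⊗ q)/‖q‖^β dq = (2/c^{δ,β}) I`. -/
theorem stmt2 (n : ℕ) (hn : 1 ≤ n) (δ β : ℝ) (hδ : 0 < δ) (hβ : β < n + 2) :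
    (Matrix.of fun i j : Fin n =>
        ∫ q in Metric.ball (0 : EuclideanSpace ℝ (Fin n)) δ,
          q i * q j / ‖q‖ ^ β) =
      (2 / cdb n δ β) • (1 : Matrix (Fin n) (Fin n) ℝ) := by
  classical
  haveI : Nonempty (Fin n) := ⟨⟨0, hn⟩⟩
  haveI : Nontrivial (EuclideanSpace ℝ (Fin n)) := by
    have h1 : ‖EuclideanSpace.single (⟨0, hn⟩ : Fin n) (1:ℝ)‖ = 1 := by
      simp [EuclideanSpace.norm_single]
    refine ⟨EuclideanSpace.single ⟨0, hn⟩ (1:ℝ), 0, fun h => ?_⟩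
    rw [h] at h1
    simp at h1
  have hβ' : (0:ℝ) < (n:ℝ) + 2 - β := by linarith
  have hn' : (0:ℝ) < (n:ℝ) := by exact_mod_cast hn
  have hΓ : 0 < Real.Gamma ((n:ℝ)/2 + 1) := Real.Gamma_pos_of_pos (by positivity)
  have hπ : (0:ℝ) < Real.pi ^ ((n:ℝ)/2) := Real.rpow_pos_of_pos Real.pi_pos _
  have hδ' : (0:ℝ) < δ ^ ((n:ℝ) + 2 - β) := Real.rpow_pos_of_pos hδ _
  -- the diagonal value
  set c : ℝ := Real.pi ^ ((n:ℝ)/2) * δ ^ ((n:ℝ) + 2 - β) /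
      (((n:ℝ) + 2 - β) * Real.Gamma ((n:ℝ)/2 + 1)) with hc
  -- integrability
  have hbig : IntegrableOn (fun x : EuclideanSpace ℝ (Fin n) => ‖x‖ ^ (2 - β))
      (ball (0 : EuclideanSpace ℝ (Fin n)) δ) := key_int hn hδ hβ
  have hIntf : ∀ i j : Fin n,
      IntegrableOn (fun q : EuclideanSpace ℝ (Fin n) => q i * q j / ‖q‖ ^ β)
        (ball (0 : EuclideanSpace ℝ (Fin n)) δ) := by
    intro i j
    refine hbig.mono' ?_ (Filter.Eventually.of_forall fun q => ?_)
    · exact (by fun_prop :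
        Measurable fun q : EuclideanSpace ℝ (Fin n) => q i * q j / ‖q‖ ^ β).aestronglyMeasurable
    · by_cases hq : q = 0
      · subst hq
        simp only [norm_zero]
        have : ((0 : EuclideanSpace ℝ (Fin n)) i) = 0 := rfl
        rw [this]
        simp only [zero_mul, zero_div, norm_zero]
        exact Real.rpow_nonneg (le_refl 0) _
      · have hq0 : 0 < ‖q‖ := norm_pos_iff.2 hq
        have hqβ : 0 < ‖q‖ ^ β := Real.rpow_pos_of_pos hq0 β
        rw [Real.norm_eq_abs, abs_div, abs_of_pos hqβ]
        have h1 : |q i * q j| ≤ ‖q‖ ^ 2 := by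
          rw [abs_mul]
          calc |q i| * |q j| ≤ ‖q‖ * ‖q‖ :=
              mul_le_mul (coord_abs_le_norm q i) (coord_abs_le_norm q j)
                (abs_nonneg _) (norm_nonneg _)
          _ = ‖q‖ ^ 2 := (sq ‖q‖).symm
        calc |q i * q j| / ‖q‖ ^ β ≤ ‖q‖ ^ 2 / ‖q‖ ^ β :=
            div_le_div_of_nonneg_right h1 hqβ.le
        _ = ‖q‖ ^ (2 - β) := by rw [Real.rpow_sub hq0, Real.rpow_two]
  -- symmetry of diagonal entries
  set I : Fin n → ℝ := fun i =>
    ∫ q in ball (0 : EuclideanSpace ℝ (Fin n)) δ, q i * q i / ‖q‖ ^ β with hI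
  have hsym : ∀ i k : Fin n, I i = I k := by
    intro i k
    set e : EuclideanSpace ℝ (Fin n) ≃ₗᵢ[ℝ] EuclideanSpace ℝ (Fin n) :=
      LinearIsometryEquiv.piLpCongrLeft 2 ℝ ℝ (Equiv.swap i k) with he
    have hpre : e ⁻¹' (ball (0 : EuclideanSpace ℝ (Fin n)) δ) = ball 0 δ := by
      rw [LinearIsometryEquiv.preimage_ball, map_zero]
    have h := e.measurePreserving.setIntegral_preimage_emb
      (e.toMeasurableEquiv.measurableEmbedding)
      (fun q : EuclideanSpace ℝ (Fin n) => q k * q k / ‖q‖ ^ β) (ball 0 δ)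
    rw [hpre] at h
    rw [hI]
    simp only
    rw [← h]
    refine setIntegral_congr_fun measurableSet_ball fun x _ => ?_
    have h1 : (e x) k = x i := by
      simp only [he, LinearIsometryEquiv.piLpCongrLeft_apply, Equiv.piCongrLeft'_apply,
        Equiv.symm_swap]
      rw [Equiv.swap_apply_right]
    rw [h1, e.norm_map]
  -- summing the diagonal entries
  have hzero_ae : ∀ᵐ q ∂((volume : Measure (EuclideanSpace ℝ (Fin n))).restrict
      (ball (0 : EuclideanSpace ℝ (Fin n)) δ)), q ≠ 0 := by
    refine ae_restrict_of_ae ?_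
    rw [ae_iff]
    simp only [ne_eq, not_not, Set.setOf_eq_eq_singleton]
    exact measure_singleton _
  have hkey : ∀ i : Fin n, (n:ℝ) * I i = (n:ℝ) * (Real.pi ^ ((n:ℝ)/2) /
      Real.Gamma ((n:ℝ)/2 + 1)) * (δ ^ ((n:ℝ) + 2 - β) / ((n:ℝ) + 2 - β)) := by
    intro i
    have h1 : ∑ k : Fin n, I k
        = ∫ q in ball (0 : EuclideanSpace ℝ (Fin n)) δ,
            (∑ k : Fin n, q k * q k / ‖q‖ ^ β) :=
      (integral_finset_sum Finset.univ fun k _ => hIntf k k).symm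
    have h2 : (∑ k : Fin n, I k) = (n:ℝ) * I i := by
      calc (∑ k : Fin n, I k) = ∑ _k : Fin n, I i := Finset.sum_congr rfl fun k _ => hsym k i
      _ = (n:ℝ) * I i := by
        rw [Finset.sum_const, Finset.card_univ, Fintype.card_fin, nsmul_eq_mul]
    have h3 : ∫ q in ball (0 : EuclideanSpace ℝ (Fin n)) δ,
        (∑ k : Fin n, q k * q k / ‖q‖ ^ β)
        = ∫ q in ball (0 : EuclideanSpace ℝ (Fin n)) δ, ‖q‖ ^ (2 - β) := by
      refine integral_congr_ae ?_
      filter_upwards [hzero_ae] with q hq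
      have hq0 : 0 < ‖q‖ := norm_pos_iff.2 hq
      rw [← Finset.sum_div]
      have hs : ∑ k : Fin n, q k * q k = ‖q‖ ^ 2 := by
        rw [EuclideanSpace.norm_eq, Real.sq_sqrt (by positivity)]
        refine Finset.sum_congr rfl fun k _ => ?_
        rw [Real.norm_eq_abs, sq_abs, sq]
      rw [hs, Real.rpow_sub hq0, Real.rpow_two]
    rw [← h2, h1, h3, key_val hn hδ hβ]
  have hdiagval : ∀ i : Fin n, I i = 2 / cdb n δ β := by
    intro i
    have h := hkey i
    have : I i = (Real.pi ^ ((n:ℝ)/2) / Real.Gamma ((n:ℝ)/2 + 1)) *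
        (δ ^ ((n:ℝ) + 2 - β) / ((n:ℝ) + 2 - β)) := by
      apply mul_left_cancel₀ hn'.ne'
      rw [h]
      ring
    rw [this, cdb]
    field_simp
  ext i j
  rw [Matrix.of_apply, Matrix.smul_apply, Matrix.one_apply]
  by_cases hij : i = j
  · subst hij
    rw [if_pos rfl, smul_eq_mul, mul_one]
    exact hdiagval i
  · rw [if_neg hij, smul_eq_mul, mul_zero]
    exact offdiag_zero hij
end

section
/- Let n ≥ 1, δ > 0, β < n+2, c^{δ,β} = 2(n+2−β)Γ(n/2+1)/(π^{n/2} δ^{n+2−β}), and μ > 0. For each nonzero ν ∈ ℝ^n, the quantity λ₂(ν) = (n+2) μ c^{δ,β} ∫_{B_δ(0)} (ν·w)/(‖ν‖² ‖w‖^{β+2}) (sin(ν·w) − ν·w) dw is strictly negative. -/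
open MeasureTheory

open scoped ENNReal NNReal

open Set Metric in
/-- `‖w‖ ^ s` is integrable on a ball around the origin when `-dim < s`. -/
lemma integrableOn_norm_rpow_ball {E : Type*} [NormedAddCommGroup E] [NormedSpace ℝ E]
    [MeasurableSpace E] [BorelSpace E] [FiniteDimensional ℝ E] [Nontrivial E]
    (μ : Measure E) [μ.IsAddHaarMeasure] {s δ : ℝ} (hδ : 0 < δ)
    (hs : -(Module.finrank ℝ E : ℝ) < s) :
    IntegrableOn (fun w : E => ‖w‖ ^ s) (Metric.ball 0 δ) μ := by
  set m : ℕ := Module.finrank ℝ E - 1 with hm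
  have hfr : 1 ≤ Module.finrank ℝ E := Module.finrank_pos
  have hmcast : (m : ℝ) = (Module.finrank ℝ E : ℝ) - 1 := by
    rw [hm, Nat.cast_sub hfr]; norm_num
  have hexp : -1 < (m : ℝ) + s := by rw [hmcast]; linarith
  constructor
  · exact (by fun_prop : Measurable fun w : E => ‖w‖ ^ s).aestronglyMeasurable
  · rw [hasFiniteIntegral_iff_norm]
    set F : ℝ → ℝ≥0∞ := fun r => Set.indicator (Iio δ) (fun r => ENNReal.ofReal (r ^ s)) r
      with hFdef
    have hF : Measurable F :=
      ((by fun_prop : Measurable fun r : ℝ => r ^ s).ennreal_ofReal).indicator measurableSet_Iio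
    have key : ∀ x : E,
        (Metric.ball (0 : E) δ).indicator (fun w => ENNReal.ofReal ‖‖w‖ ^ s‖) x = F ‖x‖ := by
      intro x
      have hn : ‖‖x‖ ^ s‖ = ‖x‖ ^ s := by
        rw [Real.norm_eq_abs, abs_of_nonneg (Real.rpow_nonneg (norm_nonneg _) _)]
      by_cases hx : x ∈ Metric.ball (0 : E) δ
      · have hx' : ‖x‖ ∈ Iio δ := mem_ball_zero_iff.mp hx
        simp only [hFdef, Set.indicator_of_mem hx, Set.indicator_of_mem hx']
        rw [hn]
      · have hx' : ‖x‖ ∉ Iio δ := fun h => hx (mem_ball_zero_iff.mpr h)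
        simp [hFdef, Set.indicator_of_notMem hx, Set.indicator_of_notMem hx']
    have step1 : ∫⁻ w in Metric.ball (0 : E) δ, ENNReal.ofReal ‖‖w‖ ^ s‖ ∂μ
        = ∫⁻ w, F ‖w‖ ∂μ := by
      rw [← lintegral_indicator measurableSet_ball]
      exact lintegral_congr key
    have step2 : ∫⁻ w, F ‖w‖ ∂μ
        = μ.toSphere Set.univ * ∫⁻ r : Ioi (0 : ℝ), F r ∂(Measure.volumeIoiPow m) := by
      calc ∫⁻ w, F ‖w‖ ∂μ = ∫⁻ w in ({(0 : E)}ᶜ : Set E), F ‖w‖ ∂μ := by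
            rw [restrict_compl_singleton]
        _ = ∫⁻ w : ({(0 : E)}ᶜ : Set E), F ‖(w : E)‖ ∂(μ.comap Subtype.val) :=
            (lintegral_subtype_comap (measurableSet_singleton _).compl _).symm
        _ = ∫⁻ p : sphere (0 : E) 1 × Ioi (0 : ℝ), F p.2
              ∂(μ.toSphere.prod (Measure.volumeIoiPow m)) :=
            (by
              have h := μ.measurePreserving_homeomorphUnitSphereProd.lintegral_comp_emb
                (Homeomorph.measurableEmbedding _) (fun p => F p.2)
              simpa [homeomorphUnitSphereProd_apply_snd_coe] using h)
        _ = μ.toSphere Set.univ * ∫⁻ r : Ioi (0 : ℝ), F r ∂(Measure.volumeIoiPow m) := by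
            have hm2 : Measurable fun p : ↑(sphere (0 : E) 1) × ↑(Ioi (0 : ℝ)) => F ↑p.2 :=
              hF.comp (measurable_subtype_coe.comp measurable_snd)
            rw [lintegral_prod _ hm2.aemeasurable]
            simp [lintegral_const, mul_comm]
    have step3 : ∫⁻ r : Ioi (0 : ℝ), F r ∂(Measure.volumeIoiPow m)
        = ∫⁻ r in Ioi (0 : ℝ), ENNReal.ofReal (r ^ m) * F r ∂(volume : Measure ℝ) := by
      have hg2 : Measurable fun r : ↑(Ioi (0 : ℝ)) => F ↑r := hF.comp measurable_subtype_coe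
      simp only [Measure.volumeIoiPow]
      rw [lintegral_withDensity_eq_lintegral_mul _
          ((measurable_subtype_coe.pow_const m).ennreal_ofReal) hg2]
      simp only [Pi.mul_apply]
      exact lintegral_subtype_comap measurableSet_Ioi fun r => ENNReal.ofReal (r ^ m) * F r
    have step4 : ∫⁻ r in Ioi (0 : ℝ), ENNReal.ofReal (r ^ m) * F r ∂(volume : Measure ℝ)
        = ∫⁻ r in Ioo (0 : ℝ) δ, ENNReal.ofReal (r ^ ((m : ℝ) + s)) ∂(volume : Measure ℝ) := by
      rw [← lintegral_indicator measurableSet_Ioi, ← lintegral_indicator measurableSet_Ioo]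
      apply lintegral_congr
      intro r
      by_cases h0 : (0 : ℝ) < r
      · by_cases h1 : r < δ
        · have hmul : ENNReal.ofReal (r ^ m) * ENNReal.ofReal (r ^ s)
              = ENNReal.ofReal (r ^ ((m : ℝ) + s)) := by
            rw [← ENNReal.ofReal_mul (pow_nonneg h0.le _), ← Real.rpow_natCast r m,
              ← Real.rpow_add h0]
          simp only [hFdef, Set.indicator_of_mem (Set.mem_Ioi.mpr h0),
            Set.indicator_of_mem (Set.mem_Iio.mpr h1),
            Set.indicator_of_mem (Set.mem_Ioo.mpr ⟨h0, h1⟩)]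
          exact hmul
        · simp [hFdef, Set.indicator_of_mem (Set.mem_Ioi.mpr h0),
            Set.indicator_of_notMem (fun h => h1 (Set.mem_Iio.mp h)),
            Set.indicator_of_notMem (fun h => h1 (Set.mem_Ioo.mp h).2)]
      · simp [Set.indicator_of_notMem (fun h => h0 (Set.mem_Ioi.mp h)),
          Set.indicator_of_notMem (fun h => h0 (Set.mem_Ioo.mp h).1)]
    have hfin : ∫⁻ r in Ioo (0 : ℝ) δ, ENNReal.ofReal (r ^ ((m : ℝ) + s))
        ∂(volume : Measure ℝ) < ⊤ := by
      have hint : IntegrableOn (fun r : ℝ => r ^ ((m : ℝ) + s)) (Ioo 0 δ) :=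
        (intervalIntegral.integrableOn_Ioo_rpow_iff hδ).mpr hexp
      have h2 := hint.2
      rw [hasFiniteIntegral_iff_norm] at h2
      refine lt_of_le_of_lt (le_of_eq ?_) h2
      refine setLIntegral_congr_fun measurableSet_Ioo ?_
      intro r hr
      dsimp only
      rw [Real.norm_eq_abs, abs_of_nonneg (Real.rpow_nonneg hr.1.le _)]
    rw [step1, step2, step3, step4]
    exact ENNReal.mul_lt_top (measure_lt_top _ _) hfin

/-- Global cubic bound: `|sin x − x| ≤ 2 |x|³`. -/
lemma abs_sin_sub_le_cube (x : ℝ) : |Real.sin x - x| ≤ 2 * |x| ^ 3 := by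
  rcases le_or_gt |x| 1 with hx | hx
  · have hb := Real.sin_bound hx
    have e : Real.sin x - x = (Real.sin x - (x - x ^ 3 / 6)) + (-(x ^ 3 / 6)) := by ring
    have h1 : |Real.sin x - x| ≤ |x| ^ 4 * (5 / 96) + |x| ^ 3 / 6 := by
      rw [e]
      refine (abs_add_le _ _).trans ?_
      have habs : |(-(x ^ 3 / 6))| = |x| ^ 3 / 6 := by
        rw [abs_neg, abs_div, abs_pow]
        norm_num
      rw [habs]
      have h5 : |x| ^ 5 / 100 ≤ |x| ^ 4 * (5 / 96) := by
        nlinarith [pow_nonneg (abs_nonneg x) 4, abs_nonneg x,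
          mul_le_mul_of_nonneg_left hx (pow_nonneg (abs_nonneg x) 4)]
      linarith [hb, h5]
    have hx0 : (0 : ℝ) ≤ |x| := abs_nonneg x
    nlinarith [pow_le_pow_left₀ hx0 hx 3, pow_nonneg hx0 3, pow_nonneg hx0 4,
      mul_le_of_le_one_left (pow_nonneg hx0 3) hx]
  · have h1 : |Real.sin x - x| ≤ |Real.sin x| + |x| := abs_sub _ _
    have h2 : |Real.sin x| ≤ |x| := Real.abs_sin_le_abs
    have hx0 : (1 : ℝ) ≤ |x| := hx.le
    have h3 : |x| ≤ |x| ^ 3 := le_self_pow₀ hx0 (by norm_num)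
    linarith

/-- The transverse eigenvalue `λ₂(ν)` of the peridynamic multiplier is strictly negative
for every nonzero `ν`. -/
theorem stmt3 (n : ℕ) (hn : 1 ≤ n) (δ β μ : ℝ) (hδ : 0 < δ) (hβ : β < n + 2)
    (hμ : 0 < μ) (ν : EuclideanSpace ℝ (Fin n)) (hν : ν ≠ 0) :
    ((n : ℝ) + 2) * μ * cdb n δ β *
      ∫ w in Metric.ball (0 : EuclideanSpace ℝ (Fin n)) δ,
        (inner ℝ ν w : ℝ) / (‖ν‖ ^ 2 * ‖w‖ ^ (β + 2)) *
          (Real.sin (inner ℝ ν w : ℝ) - (inner ℝ ν w : ℝ)) < 0 := by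
  haveI : Nonempty (Fin n) := Fin.pos_iff_nonempty.mp hn
  have hνn : (0 : ℝ) < ‖ν‖ := norm_pos_iff.mpr hν
  set g : EuclideanSpace ℝ (Fin n) → ℝ := fun w =>
    (inner ℝ ν w : ℝ) / (‖ν‖ ^ 2 * ‖w‖ ^ (β + 2)) *
      (Real.sin (inner ℝ ν w : ℝ) - (inner ℝ ν w : ℝ)) with hg
  -- positivity of the constant
  have hc : 0 < ((n : ℝ) + 2) * μ * cdb n δ β := by
    have hnum : 0 < 2 * ((n : ℝ) + 2 - β) * Real.Gamma ((n : ℝ) / 2 + 1) := by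
      have hG : 0 < Real.Gamma ((n : ℝ) / 2 + 1) := Real.Gamma_pos_of_pos (by positivity)
      have hb2 : (0 : ℝ) < (n : ℝ) + 2 - β := by linarith
      positivity
    have hden : 0 < Real.pi ^ ((n : ℝ) / 2) * δ ^ ((n : ℝ) + 2 - β) :=
      mul_pos (Real.rpow_pos_of_pos Real.pi_pos _) (Real.rpow_pos_of_pos hδ _)
    have hcdb : 0 < cdb n δ β := div_pos hnum hden
    positivity
  -- the integral is strictly negative
  suffices hI : (∫ w in Metric.ball (0 : EuclideanSpace ℝ (Fin n)) δ, g w) < 0 by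
    exact mul_neg_of_pos_of_neg hc hI
  -- measurability
  have hmeas : Measurable g := by
    apply Measurable.mul
    · apply Measurable.div
      · exact (Continuous.inner continuous_const continuous_id).measurable
      · fun_prop
    · exact (Real.continuous_sin.comp
          (Continuous.inner continuous_const continuous_id)).measurable.sub
        (Continuous.inner continuous_const continuous_id).measurable
  -- pointwise bound by an integrable majorant
  have hbound : ∀ w : EuclideanSpace ℝ (Fin n),
      ‖g w‖ ≤ 2 * ‖ν‖ ^ 2 * ‖w‖ ^ ((2 : ℝ) - β) := by
    intro w
    rcases eq_or_ne w 0 with rfl | hw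
    · have h0 : g 0 = 0 := by simp [hg]
      rw [h0, norm_zero]
      positivity
    · have hr : (0 : ℝ) < ‖w‖ := norm_pos_iff.mpr hw
      have hD : (0 : ℝ) < ‖ν‖ ^ 2 * ‖w‖ ^ (β + 2) :=
        mul_pos (pow_pos hνn 2) (Real.rpow_pos_of_pos hr _)
      set x : ℝ := (inner ℝ ν w : ℝ) with hx
      have h1 : |x| ≤ ‖ν‖ * ‖w‖ := abs_real_inner_le_norm ν w
      have h2 : |Real.sin x - x| ≤ 2 * |x| ^ 3 := abs_sin_sub_le_cube x
      have habs : |x| ≥ 0 := abs_nonneg x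
      have hnum : |x * (Real.sin x - x)| ≤ 2 * (‖ν‖ * ‖w‖) ^ 4 := by
        rw [abs_mul]
        calc |x| * |Real.sin x - x| ≤ |x| * (2 * |x| ^ 3) :=
              mul_le_mul_of_nonneg_left h2 habs
          _ = 2 * |x| ^ 4 := by ring
          _ ≤ 2 * (‖ν‖ * ‖w‖) ^ 4 := by
              have := pow_le_pow_left₀ habs h1 4
              linarith
      have heq : 2 * (‖ν‖ * ‖w‖) ^ 4
          = 2 * ‖ν‖ ^ 2 * ‖w‖ ^ ((2 : ℝ) - β) * (‖ν‖ ^ 2 * ‖w‖ ^ (β + 2)) := by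
        have h4 : ‖w‖ ^ ((2 : ℝ) - β) * ‖w‖ ^ (β + 2) = ‖w‖ ^ (4 : ℕ) := by
          rw [← Real.rpow_add hr]
          rw [show (2 : ℝ) - β + (β + 2) = ((4 : ℕ) : ℝ) by push_cast; ring,
            Real.rpow_natCast]
        calc 2 * (‖ν‖ * ‖w‖) ^ 4 = 2 * ‖ν‖ ^ 4 * ‖w‖ ^ (4 : ℕ) := by ring
          _ = 2 * ‖ν‖ ^ 4 * (‖w‖ ^ ((2 : ℝ) - β) * ‖w‖ ^ (β + 2)) := by rw [h4]
          _ = _ := by ring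
      have hgw : ‖g w‖ = |x * (Real.sin x - x)| / (‖ν‖ ^ 2 * ‖w‖ ^ (β + 2)) := by
        simp only [hg, ← hx]
        rw [div_mul_eq_mul_div, Real.norm_eq_abs, abs_div, abs_of_pos hD]
      rw [hgw, div_le_iff₀ hD, ← heq]
      exact hnum
  have hmaj : IntegrableOn
      (fun w : EuclideanSpace ℝ (Fin n) => 2 * ‖ν‖ ^ 2 * ‖w‖ ^ ((2 : ℝ) - β))
      (Metric.ball (0 : EuclideanSpace ℝ (Fin n)) δ) := by
    have hfr : -(Module.finrank ℝ (EuclideanSpace ℝ (Fin n)) : ℝ) < (2 : ℝ) - β := by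
      rw [finrank_euclideanSpace_fin]
      linarith
    exact (integrableOn_norm_rpow_ball (volume : Measure (EuclideanSpace ℝ (Fin n))) hδ
      hfr).const_mul _
  have hint : IntegrableOn g (Metric.ball (0 : EuclideanSpace ℝ (Fin n)) δ) :=
    Integrable.mono' hmaj hmeas.aestronglyMeasurable
      (Filter.Eventually.of_forall hbound)
  -- g ≤ 0 everywhere
  have hnonpos : ∀ w : EuclideanSpace ℝ (Fin n), g w ≤ 0 := by
    intro w
    have hD : (0 : ℝ) ≤ ‖ν‖ ^ 2 * ‖w‖ ^ (β + 2) := by positivity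
    set x : ℝ := (inner ℝ ν w : ℝ) with hx
    have hnum : x * (Real.sin x - x) ≤ 0 := by
      have h1 : x * Real.sin x ≤ |x| * |Real.sin x| := by
        calc x * Real.sin x ≤ |x * Real.sin x| := le_abs_self _
          _ = |x| * |Real.sin x| := abs_mul _ _
      have h2 : |Real.sin x| ≤ |x| := Real.abs_sin_le_abs
      nlinarith [abs_nonneg x, sq_abs x]
    have hgw : g w = x * (Real.sin x - x) / (‖ν‖ ^ 2 * ‖w‖ ^ (β + 2)) := by
      simp only [hg, ← hx]
      rw [div_mul_eq_mul_div]
    rw [hgw]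
    exact div_nonpos_of_nonpos_of_nonneg hnum hD
  -- the support of -g has positive measure in the ball
  have hker : (volume : Measure (EuclideanSpace ℝ (Fin n)))
      {w : EuclideanSpace ℝ (Fin n) | (inner ℝ ν w : ℝ) = 0} = 0 := by
    have hset : {w : EuclideanSpace ℝ (Fin n) | (inner ℝ ν w : ℝ) = 0}
        = (LinearMap.ker (innerSL ℝ ν : EuclideanSpace ℝ (Fin n) →ₗ[ℝ] ℝ) : Set (EuclideanSpace ℝ (Fin n))) := by
      ext w
      simp [LinearMap.mem_ker]
    rw [hset]
    apply Measure.addHaar_submodule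
    intro htop
    apply hν
    have hmem : ν ∈ LinearMap.ker (innerSL ℝ ν : EuclideanSpace ℝ (Fin n) →ₗ[ℝ] ℝ) := by rw [htop]; trivial
    have hzero : (inner ℝ ν ν : ℝ) = 0 := hmem
    exact inner_self_eq_zero.mp hzero
  have hsupp : 0 < (volume : Measure (EuclideanSpace ℝ (Fin n)))
      (Function.support (fun w => -g w) ∩ Metric.ball (0 : EuclideanSpace ℝ (Fin n)) δ) := by
    have hsub : Metric.ball (0 : EuclideanSpace ℝ (Fin n)) δ
          \ {w : EuclideanSpace ℝ (Fin n) | (inner ℝ ν w : ℝ) = 0}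
        ⊆ Function.support (fun w => -g w)
            ∩ Metric.ball (0 : EuclideanSpace ℝ (Fin n)) δ := by
      rintro w ⟨hwball, hwk⟩
      have hx : (inner ℝ ν w : ℝ) ≠ 0 := hwk
      have hw : w ≠ 0 := by
        intro h; apply hx; rw [h]; exact inner_zero_right ν
      have hr : (0 : ℝ) < ‖w‖ := norm_pos_iff.mpr hw
      have hD : (0 : ℝ) < ‖ν‖ ^ 2 * ‖w‖ ^ (β + 2) :=
        mul_pos (pow_pos hνn 2) (Real.rpow_pos_of_pos hr _)
      set x : ℝ := (inner ℝ ν w : ℝ) with hxdef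
      have hnum : x * (Real.sin x - x) < 0 := by
        rcases lt_or_gt_of_ne hx with hneg | hpos
        · have hs := Real.lt_sin hneg
          nlinarith
        · have hs := Real.sin_lt hpos
          nlinarith
      have hglt : g w < 0 := by
        have hgw : g w = x * (Real.sin x - x) / (‖ν‖ ^ 2 * ‖w‖ ^ (β + 2)) := by
          simp only [hg, ← hxdef]
          rw [div_mul_eq_mul_div]
        rw [hgw]
        exact div_neg_of_neg_of_pos hnum hD
      refine ⟨?_, hwball⟩
      simp only [Function.mem_support, ne_eq, neg_eq_zero]
      exact hglt.ne
    calc (0 : ℝ≥0∞) < volume (Metric.ball (0 : EuclideanSpace ℝ (Fin n)) δ) :=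
          Metric.measure_ball_pos _ _ hδ
      _ = volume (Metric.ball (0 : EuclideanSpace ℝ (Fin n)) δ
            \ {w : EuclideanSpace ℝ (Fin n) | (inner ℝ ν w : ℝ) = 0}) :=
          (measure_diff_null hker).symm
      _ ≤ _ := measure_mono hsub
  have hpos : 0 < ∫ w in Metric.ball (0 : EuclideanSpace ℝ (Fin n)) δ, -g w :=
    (setIntegral_pos_iff_support_of_nonneg_ae
      (Filter.Eventually.of_forall fun w => neg_nonneg.mpr (hnonpos w)) hint.neg).mpr hsupp
  rw [integral_neg] at hpos
  linarith
end

section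
/- Let n ≥ 2, ν ∈ ℝ^n nonzero, and let M = α₁ I + α₂ (ν ⊗ ν) with α₁ + α₂‖ν‖² < 0 and α₁ < 0. Then M is invertible and the operator norm (induced by the Euclidean vector norm) of M⁻¹ equals 1 / min{|α₁ + α₂‖ν‖²|, |α₁|}. -/
set_option maxHeartbeats 1000000 in
/-- For `M = α₁ I + α₂ (ν ⊗ ν)` with both eigenvalues negative, `M` is invertible and
the operator norm of `M⁻¹` equals the reciprocal of the minimal absolute eigenvalue. -/
theorem stmt5 (n : ℕ) (hn : 2 ≤ n) (ν : Fin n → ℝ) (hν : ν ≠ 0) (α₁ α₂ : ℝ)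
    (h₁ : α₁ + α₂ * ∑ i, ν i ^ 2 < 0) (h₂ : α₁ < 0)
    (M : Matrix (Fin n) (Fin n) ℝ)
    (hM : M = α₁ • (1 : Matrix (Fin n) (Fin n) ℝ) + α₂ • Matrix.vecMulVec ν ν) :
    IsUnit M ∧
      ‖Matrix.toEuclideanCLM (𝕜 := ℝ) M⁻¹‖ =
        1 / min |α₁ + α₂ * ∑ i, ν i ^ 2| |α₁| := by
  set s : ℝ := ∑ i, ν i ^ 2 with hs_def
  have hs : 0 < s := by
    have : ∃ i, ν i ≠ 0 := by
      by_contra h; push_neg at h; exact hν (funext h)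
    obtain ⟨i, hi⟩ := this
    exact Finset.sum_pos' (fun j _ => sq_nonneg _)
      ⟨i, Finset.mem_univ i, by positivity⟩
  have hα₁ : α₁ ≠ 0 := ne_of_lt h₂
  have hαs : α₁ + α₂ * s ≠ 0 := ne_of_lt h₁
  set c₁ : ℝ := α₁⁻¹ with hc₁
  set c₂ : ℝ := -α₂ / (α₁ * (α₁ + α₂ * s)) with hc₂
  set P : Matrix (Fin n) (Fin n) ℝ := Matrix.vecMulVec ν ν with hP
  set N : Matrix (Fin n) (Fin n) ℝ := c₁ • 1 + c₂ • P with hN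
  have hPP : P * P = s • P := by
    ext i j
    simp only [hP, Matrix.mul_apply, Matrix.vecMulVec_apply, Matrix.smul_apply,
      smul_eq_mul]
    rw [hs_def, Finset.sum_mul]
    congr 1; ext k; ring
  have hcoef : α₁ * c₂ + α₂ * c₁ + α₂ * c₂ * s = 0 := by
    rw [hc₁, hc₂]; field_simp; try ring
  have hMN : M * N = 1 := by
    have h1 : α₁ * c₁ = 1 := by rw [hc₁]; field_simp
    have expand : M * N = (α₁ * c₁) • (1 : Matrix (Fin n) (Fin n) ℝ)
        + (α₁ * c₂ + α₂ * c₁ + α₂ * c₂ * s) • P := by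
      rw [hM, hN]
      simp only [add_mul, mul_add, smul_mul_assoc, Matrix.mul_smul, one_mul,
        mul_one, hPP]
      module
    rw [expand, h1, hcoef, one_smul, zero_smul, add_zero]
  have hUnit : IsUnit M := by
    have : Invertible M := invertibleOfRightInverse M N hMN
    exact isUnit_of_invertible M
  have hMinv : M⁻¹ = N := Matrix.inv_eq_right_inv hMN
  refine ⟨hUnit, ?_⟩
  rw [hMinv]
  -- eigenvalues of N
  set lam : ℝ := (α₁ + α₂ * s)⁻¹ with hlam
  have hlam_eq : c₁ + c₂ * s = lam := by
    rw [hc₁, hc₂, hlam]; field_simp; try ring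
  set K : ℝ := max |c₁| |lam| with hK
  have hK0 : 0 ≤ K := le_trans (abs_nonneg _) (le_max_left _ _)
  -- the action of N
  have hmulvec : ∀ v : Fin n → ℝ,
      N.mulVec v = fun i => c₁ * v i + c₂ * (∑ j, ν j * v j) * ν i := by
    intro v; funext i
    simp only [hN, Matrix.add_mulVec, Matrix.smul_mulVec, Matrix.one_mulVec,
      Pi.add_apply, Pi.smul_apply, smul_eq_mul, hP]
    congr 1
    have hvv : (Matrix.vecMulVec ν ν).mulVec v i = ∑ j, ν i * ν j * v j := by
      simp [Matrix.mulVec, dotProduct, Matrix.vecMulVec_apply]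
    rw [hvv, Finset.mul_sum, Finset.mul_sum, Finset.sum_mul]
    exact Finset.sum_congr rfl fun j _ => by ring
  have hnorm_apply : ∀ x : EuclideanSpace ℝ (Fin n),
      ‖Matrix.toEuclideanCLM (𝕜 := ℝ) N x‖ ^ 2
        = ∑ i, (N.mulVec (WithLp.equiv 2 _ x) i) ^ 2 := by
    intro x
    rw [EuclideanSpace.norm_eq, Real.sq_sqrt (by positivity)]
    refine Finset.sum_congr rfl fun i _ => ?_
    have hi : (Matrix.toEuclideanCLM (𝕜 := ℝ) N x) i
        = N.mulVec (WithLp.equiv 2 _ x) i :=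
      calc (Matrix.toEuclideanCLM (𝕜 := ℝ) N x) i
          = (WithLp.equiv 2 _ (Matrix.toEuclideanCLM (𝕜 := ℝ) N x)) i := rfl
        _ = Matrix.toLin' N (WithLp.equiv 2 _ x) i := by
            exact congrFun (Matrix.ofLp_toEuclideanCLM N x) i
        _ = N.mulVec (WithLp.equiv 2 _ x) i := by rw [Matrix.toLin'_apply]
    rw [Real.norm_eq_abs, sq_abs, hi]
  have hxnorm : ∀ x : EuclideanSpace ℝ (Fin n),
      ‖x‖ ^ 2 = ∑ i, (WithLp.equiv 2 _ x i) ^ 2 := by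
    intro x
    rw [EuclideanSpace.norm_eq, Real.sq_sqrt (by positivity)]
    congr 1; ext i; rw [Real.norm_eq_abs, sq_abs]; rfl
  have hnorm : ‖Matrix.toEuclideanCLM (𝕜 := ℝ) N‖ = K := by
    apply ContinuousLinearMap.opNorm_eq_of_bounds hK0
    · -- upper bound
      intro x
      have hsq : ‖Matrix.toEuclideanCLM (𝕜 := ℝ) N x‖ ^ 2 ≤ (K * ‖x‖) ^ 2 := by
        rw [hnorm_apply x, mul_pow, hxnorm x]
        set v : Fin n → ℝ := WithLp.equiv 2 _ x with hv
        set t : ℝ := ∑ j, ν j * v j with ht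
        have hexp : ∑ i, (N.mulVec v i) ^ 2
            = c₁ ^ 2 * (∑ i, v i ^ 2) + (2 * c₁ * c₂ + c₂ ^ 2 * s) * t ^ 2 := by
          rw [hmulvec v]
          have : ∀ i, (c₁ * v i + c₂ * t * ν i) ^ 2
              = c₁ ^ 2 * v i ^ 2 + 2 * c₁ * c₂ * t * (ν i * v i)
                + c₂ ^ 2 * t ^ 2 * ν i ^ 2 := by intro i; ring
          simp_rw [← ht, this, Finset.sum_add_distrib, ← Finset.mul_sum, ← ht, ← hs_def]
          ring
        rw [hexp]
        have hCS : t ^ 2 ≤ s * ∑ i, v i ^ 2 := by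
          have := Finset.sum_mul_sq_le_sq_mul_sq Finset.univ ν v
          rw [← ht, ← hs_def] at this
          exact this
        have hS0 : 0 ≤ ∑ i, v i ^ 2 := Finset.sum_nonneg fun i _ => sq_nonneg _
        have hK1 : c₁ ^ 2 ≤ K ^ 2 := by
          have : |c₁| ≤ K := le_max_left _ _
          nlinarith [abs_nonneg c₁, sq_abs c₁]
        have hK2 : lam ^ 2 ≤ K ^ 2 := by
          have : |lam| ≤ K := le_max_right _ _
          nlinarith [abs_nonneg lam, sq_abs lam]
        -- s * LHS ≤ s * RHS
        have key : s * (c₁ ^ 2 * (∑ i, v i ^ 2) + (2 * c₁ * c₂ + c₂ ^ 2 * s) * t ^ 2)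
            ≤ s * (K ^ 2 * ∑ i, v i ^ 2) := by
          have hlam2 : lam ^ 2 = c₁ ^ 2 + 2 * c₁ * c₂ * s + c₂ ^ 2 * s ^ 2 := by
            rw [← hlam_eq]; ring
          nlinarith [hCS, mul_nonneg (sub_nonneg.2 hK1) (sub_nonneg.2 hCS),
            sq_nonneg t, mul_nonneg (sub_nonneg.2 hK2) (sq_nonneg t)]
        exact le_of_mul_le_mul_left (by linarith [key]) hs
      have h1 : ‖Matrix.toEuclideanCLM (𝕜 := ℝ) N x‖
          = Real.sqrt (‖Matrix.toEuclideanCLM (𝕜 := ℝ) N x‖ ^ 2) := by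
        rw [Real.sqrt_sq (norm_nonneg _)]
      have h2 : K * ‖x‖ = Real.sqrt ((K * ‖x‖) ^ 2) := by
        rw [Real.sqrt_sq (by positivity)]
      rw [h1, h2]
      exact Real.sqrt_le_sqrt hsq
    · -- lower bound
      intro C hC hbound
      have hmax : |c₁| ≤ C ∧ |lam| ≤ C := by
        constructor
        · -- orthogonal eigenvector
          obtain ⟨i, hi⟩ : ∃ i, ν i ≠ 0 := by
            by_contra h; push_neg at h; exact hν (funext h)
          obtain ⟨j, hj⟩ : ∃ j : Fin n, j ≠ i := by
            have hcard : 1 < Fintype.card (Fin n) := by simp; omega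
            exact Fintype.exists_ne_of_one_lt_card hcard i
          set w : Fin n → ℝ := fun k =>
            ν j * (if k = i then 1 else 0) - ν i * (if k = j then 1 else 0) with hw
          have hwj : w j = -ν i := by
            simp [hw, hj]
          have hw0 : w ≠ 0 := by
            intro h
            have := congrFun h j
            rw [hwj] at this
            simp at this
            exact hi this
          have hdot : ∑ k, ν k * w k = 0 := by
            simp only [hw, mul_sub, mul_ite, mul_one, mul_zero, Finset.sum_sub_distrib]
            rw [Finset.sum_ite_eq' Finset.univ i (fun k => ν k * ν j),
              Finset.sum_ite_eq' Finset.univ j (fun k => ν k * ν i)]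
            simp [mul_comm]
          set x : EuclideanSpace ℝ (Fin n) := (WithLp.equiv 2 _).symm w with hx
          have hNx : Matrix.toEuclideanCLM (𝕜 := ℝ) N x = c₁ • x := by
            rw [hx, WithLp.equiv_symm_apply, Matrix.toEuclideanCLM_toLp,
              hmulvec w]
            simp only [hdot, mul_zero, zero_mul, add_zero]
            ext k
            simp only [PiLp.toLp_apply, PiLp.smul_apply, smul_eq_mul]
          have hxn : x ≠ 0 := by
            intro h
            exact hw0 ((WithLp.equiv 2 (Fin n → ℝ)).symm.injective
              (by rw [← hx, h]; rfl))
          have := hbound x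
          rw [hNx, norm_smul, Real.norm_eq_abs] at this
          have hxpos : 0 < ‖x‖ := norm_pos_iff.mpr hxn
          exact le_of_mul_le_mul_right (by linarith) hxpos
        · set x : EuclideanSpace ℝ (Fin n) := (WithLp.equiv 2 _).symm ν with hx
          have hNx : Matrix.toEuclideanCLM (𝕜 := ℝ) N x = lam • x := by
            rw [hx, WithLp.equiv_symm_apply, Matrix.toEuclideanCLM_toLp,
              hmulvec ν]
            have hdd : (∑ j, ν j * ν j) = s := by
              rw [hs_def]; congr 1; ext j; ring
            simp only [hdd]
            ext k
            simp only [PiLp.toLp_apply, PiLp.smul_apply, smul_eq_mul]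
            rw [← hlam_eq]; ring
          have hxn : x ≠ 0 := by
            intro h
            exact hν ((WithLp.equiv 2 (Fin n → ℝ)).symm.injective
              (by rw [← hx, h]; rfl))
          have := hbound x
          rw [hNx, norm_smul, Real.norm_eq_abs] at this
          have hxpos : 0 < ‖x‖ := norm_pos_iff.mpr hxn
          exact le_of_mul_le_mul_right (by linarith) hxpos
      exact max_le hmax.1 hmax.2
  rw [hnorm]
  -- arithmetic: K = 1 / min |α₁ + α₂ s| |α₁|
  have ha : |α₁ + α₂ * s| = -(α₁ + α₂ * s) := abs_of_neg h₁
  have hb : |α₁| = -α₁ := abs_of_neg h₂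
  have hc₁abs : |c₁| = 1 / (-α₁) := by
    rw [hc₁, abs_inv, hb, one_div]
  have hlamabs : |lam| = 1 / (-(α₁ + α₂ * s)) := by
    rw [hlam, abs_inv, ha, one_div]
  rw [hK, hc₁abs, hlamabs, ha, hb]
  rcases le_total (-(α₁ + α₂ * s)) (-α₁) with h | h
  · rw [min_eq_left h, max_eq_right (by
      apply one_div_le_one_div_of_le (by linarith) h)]
  · rw [min_eq_right h, max_eq_left (by
      apply one_div_le_one_div_of_le (by linarith) h)]
end

section
/- Let n ≥ 1 and for each nonzero k ∈ ℤ^n let M_k be an invertible real symmetric n×n matrix whose eigenvalues λ satisfy |λ| ≥ C‖k‖^{θ} for all ‖k‖ ≥ r, where C, r > 0 and θ ≥ 0 are fixed. Given b ∈ H^s(𝕋^n) with b̂_0 = 0, define u by û_k = (M_k)^{−1} b̂_k for k ≠ 0 and û_0 = 0. Then u ∈ H^{s+θ}(𝕋^n). -/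
/-- Euclidean norm of a multi-index `k ∈ ℤⁿ`. -/
noncomputable def znorm {n : ℕ} (k : Fin n → ℤ) : ℝ :=
  Real.sqrt (∑ i, ((k i : ℝ)) ^ 2)

lemma znorm_nonneg {n : ℕ} (k : Fin n → ℤ) : 0 ≤ znorm k := Real.sqrt_nonneg _

lemma one_le_znorm {n : ℕ} {k : Fin n → ℤ} (hk : k ≠ 0) : 1 ≤ znorm k := by
  obtain ⟨i, hi⟩ : ∃ i, k i ≠ 0 := by
    by_contra h
    push_neg at h
    exact hk (funext h)
  have h1 : (1 : ℝ) ≤ ((k i : ℝ)) ^ 2 := by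
    have : (1 : ℤ) ≤ (k i) ^ 2 := by
      rcases lt_or_gt_of_ne hi with h | h <;> nlinarith
    exact_mod_cast this
  have hsum : (1 : ℝ) ≤ ∑ j, ((k j : ℝ)) ^ 2 := by
    calc (1 : ℝ) ≤ ((k i : ℝ)) ^ 2 := h1
    _ ≤ ∑ j, ((k j : ℝ)) ^ 2 :=
      Finset.single_le_sum (f := fun j => ((k j : ℝ)) ^ 2) (fun j _ => sq_nonneg _)
        (Finset.mem_univ i)
  unfold znorm
  rw [show (1:ℝ) = Real.sqrt 1 by simp]
  exact Real.sqrt_le_sqrt hsum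

/-- Lower bound on `‖A w‖` for a symmetric matrix whose eigenvalues are bounded below
in absolute value. -/
lemma mulVec_norm_lower {n : ℕ} {A : Matrix (Fin n) (Fin n) ℝ} (hA : A.IsHermitian)
    {a : ℝ} (ha : 0 ≤ a) (h : ∀ i, a ≤ |hA.eigenvalues i|)
    (w v : EuclideanSpace ℝ (Fin n)) (hv : Matrix.toEuclideanLin A w = v) :
    a * ‖w‖ ≤ ‖v‖ := by
  set B := hA.eigenvectorBasis with hB
  have hrepr : ∀ i, B.repr v i = hA.eigenvalues i * B.repr w i := by
    intro i
    rw [B.repr_apply_apply, B.repr_apply_apply, ← hv]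
    have hsym : (Matrix.toEuclideanLin A).IsSymmetric :=
      Matrix.isHermitian_iff_isSymmetric.1 hA
    rw [← hsym (B i) w]
    have hBi : Matrix.toEuclideanLin A (B i) = hA.eigenvalues i • B i := by
      rw [Matrix.toEuclideanLin_apply]
      have := hA.mulVec_eigenvectorBasis i
      apply (WithLp.equiv 2 (Fin n → ℝ)).injective
      simpa using this
    rw [hBi, inner_smul_left]
    simp [RCLike.star_def]
  have hnv : ‖v‖ = Real.sqrt (∑ i, (hA.eigenvalues i * B.repr w i) ^ 2) := by
    rw [← B.repr.norm_map v, EuclideanSpace.norm_eq]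
    congr 1
    refine Finset.sum_congr rfl fun i _ => ?_
    rw [hrepr i, Real.norm_eq_abs, sq_abs]
  have hnw : ‖w‖ = Real.sqrt (∑ i, (B.repr w i) ^ 2) := by
    rw [← B.repr.norm_map w, EuclideanSpace.norm_eq]
    congr 1
    refine Finset.sum_congr rfl fun i _ => ?_
    rw [Real.norm_eq_abs, sq_abs]
  rw [hnv, hnw, ← Real.sqrt_sq ha, ← Real.sqrt_mul (sq_nonneg a)]
  apply Real.sqrt_le_sqrt
  rw [Finset.mul_sum]
  refine Finset.sum_le_sum fun i _ => ?_
  rw [mul_pow]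
  apply mul_le_mul_of_nonneg_right _ (sq_nonneg _)
  calc a ^ 2 ≤ |hA.eigenvalues i| ^ 2 := by
        apply pow_le_pow_left₀ ha (h i)
  _ = hA.eigenvalues i ^ 2 := sq_abs _

lemma finite_small {n : ℕ} (r : ℝ) : {k : Fin n → ℤ | znorm k < r}.Finite := by
  have : {k : Fin n → ℤ | znorm k < r} ⊆
      Set.Icc (fun _ => -⌈r⌉) (fun _ => ⌈r⌉) := by
    intro k hk
    simp only [Set.mem_setOf_eq] at hk
    have hkr : ∀ i, |(k i : ℝ)| ≤ r := by
      intro i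
      have h1 : ((k i : ℝ)) ^ 2 ≤ ∑ j, ((k j : ℝ)) ^ 2 :=
        Finset.single_le_sum (f := fun j => ((k j : ℝ)) ^ 2) (fun j _ => sq_nonneg _)
          (Finset.mem_univ i)
      have h2 : |(k i : ℝ)| ≤ znorm k := by
        rw [← Real.sqrt_sq_eq_abs]
        exact Real.sqrt_le_sqrt h1
      linarith
    constructor <;> intro i
    · have h := abs_le.1 (hkr i)
      have h2 : (-⌈r⌉ : ℝ) ≤ (k i : ℝ) := by
        have := Int.le_ceil r; push_cast; linarith
      exact_mod_cast h2
    · have h := abs_le.1 (hkr i)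
      have h2 : ((k i : ℝ)) ≤ (⌈r⌉ : ℝ) := le_trans h.2 (Int.le_ceil r)
      exact_mod_cast h2
  exact (Set.finite_Icc _ _).subset this

/-- Regularity of the solution of the peridynamic equilibrium equation:
if the eigenvalues of `M_k` grow at least like `C‖k‖^θ`, then `û_k = (M_k)⁻¹ b̂_k`
defines a distribution in `H^{s+θ}` whenever `b ∈ H^s`. -/
theorem stmt11 (n : ℕ) (hn : 1 ≤ n)
    (M : (Fin n → ℤ) → Matrix (Fin n) (Fin n) ℝ)
    (hsymm : ∀ k, (M k).IsSymm)
    (hinv : ∀ k, k ≠ 0 → IsUnit (M k))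
    (C r θ : ℝ) (hC : 0 < C) (hr : 0 < r) (hθ : 0 ≤ θ)
    (heig : ∀ k : Fin n → ℤ, k ≠ 0 → r ≤ znorm k →
      ∀ (lam : ℝ) (v : Fin n → ℝ), v ≠ 0 → (M k).mulVec v = lam • v →
        C * znorm k ^ θ ≤ |lam|)
    (s : ℝ) (b : (Fin n → ℤ) → EuclideanSpace ℝ (Fin n))
    (hb : Summable fun k => (1 + znorm k ^ 2) ^ s * ‖b k‖ ^ 2)
    (hb0 : b 0 = 0)
    (u : (Fin n → ℤ) → EuclideanSpace ℝ (Fin n))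
    (hu0 : u 0 = 0)
    (hu : ∀ k, k ≠ 0 → (u k : Fin n → ℝ) = (M k)⁻¹.mulVec (b k)) :
    Summable fun k => (1 + znorm k ^ 2) ^ (s + θ) * ‖u k‖ ^ 2 := by
  classical
  set S : Set (Fin n → ℤ) := {k | znorm k < r} with hS
  have hSfin : S.Finite := finite_small r
  rw [← hSfin.summable_compl_iff]
  have key : ∀ k : (Fin n → ℤ), k ∉ S →
      (1 + znorm k ^ 2) ^ (s + θ) * ‖u k‖ ^ 2 ≤
        ((2 : ℝ) ^ θ * (C⁻¹) ^ 2) * ((1 + znorm k ^ 2) ^ s * ‖b k‖ ^ 2) := by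
    intro k hk
    have hkr : r ≤ znorm k := not_lt.1 hk
    have hk0 : k ≠ 0 := by
      intro h
      rw [h] at hkr
      simp [znorm] at hkr
      linarith
    have hz1 : 1 ≤ znorm k := one_le_znorm hk0
    -- eigenvalue bound
    have hH : (M k).IsHermitian := by
      rw [Matrix.IsHermitian, Matrix.conjTranspose_eq_transpose_of_trivial]
      exact (hsymm k).eq
    set a : ℝ := C * znorm k ^ θ with ha
    have ha0 : 0 < a := mul_pos hC (Real.rpow_pos_of_pos (by linarith) θ)
    have heigk : ∀ i, a ≤ |hH.eigenvalues i| := by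
      intro i
      apply heig k hk0 hkr _ (hH.eigenvectorBasis i)
      · intro h0
        have := (hH.eigenvectorBasis).orthonormal.1 i
        rw [show (hH.eigenvectorBasis i) = 0 from (WithLp.equiv 2 (Fin n → ℝ)).injective h0] at this
        simp at this
      · exact hH.mulVec_eigenvectorBasis i
    -- M k *ᵥ u k = b k
    have hMu : Matrix.toEuclideanLin (M k) (u k) = b k := by
      rw [Matrix.toEuclideanLin_apply]
      apply (WithLp.equiv 2 (Fin n → ℝ)).injective
      simp only [WithLp.equiv_apply, WithLp.ofLp_toLp]
      have : (WithLp.equiv 2 (Fin n → ℝ)) (u k) = (M k)⁻¹.mulVec (b k) := hu k hk0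
      rw [hu k hk0, Matrix.mulVec_mulVec, Matrix.mul_nonsing_inv _
        ((Matrix.isUnit_iff_isUnit_det _).1 (hinv k hk0)), Matrix.one_mulVec]
    have hnorm : a * ‖u k‖ ≤ ‖b k‖ := mulVec_norm_lower hH ha0.le heigk _ _ hMu
    -- hence ‖u k‖² ≤ a⁻² ‖b k‖²
    have hu2 : ‖u k‖ ^ 2 ≤ a⁻¹ ^ 2 * ‖b k‖ ^ 2 := by
      have h1 : ‖u k‖ ≤ a⁻¹ * ‖b k‖ := by
        rw [← le_div_iff₀' ha0] at hnorm
        rwa [div_eq_inv_mul] at hnorm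
      calc ‖u k‖ ^ 2 ≤ (a⁻¹ * ‖b k‖) ^ 2 := by
            apply pow_le_pow_left₀ (norm_nonneg _) h1
      _ = a⁻¹ ^ 2 * ‖b k‖ ^ 2 := by ring
    have hzpos : (0:ℝ) < 1 + znorm k ^ 2 := by nlinarith
    -- (1+z²)^θ ≤ 2^θ z^(2θ) so (1+z²)^(s+θ) * a⁻² ≤ 2^θ C⁻² (1+z²)^s
    have hsplit : (1 + znorm k ^ 2) ^ (s + θ) =
        (1 + znorm k ^ 2) ^ s * (1 + znorm k ^ 2) ^ θ := Real.rpow_add hzpos s θ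
    have hfac : (1 + znorm k ^ 2) ^ θ ≤ 2 ^ θ * (znorm k ^ θ) ^ 2 := by
      have h2 : 1 + znorm k ^ 2 ≤ 2 * znorm k ^ 2 := by nlinarith
      calc (1 + znorm k ^ 2) ^ θ ≤ (2 * znorm k ^ 2) ^ θ :=
            Real.rpow_le_rpow hzpos.le h2 hθ
      _ = 2 ^ θ * (znorm k ^ 2) ^ θ :=
            Real.mul_rpow (by norm_num) (by positivity)
      _ = 2 ^ θ * (znorm k ^ θ) ^ 2 := by
            rw [← Real.rpow_natCast (znorm k) 2, ← Real.rpow_natCast (znorm k ^ θ) 2,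
              ← Real.rpow_mul (znorm_nonneg k), ← Real.rpow_mul (znorm_nonneg k)]
            ring_nf
    have hainv : a⁻¹ ^ 2 = C⁻¹ ^ 2 * ((znorm k ^ θ)⁻¹) ^ 2 := by
      rw [ha, mul_inv]; ring
    calc (1 + znorm k ^ 2) ^ (s + θ) * ‖u k‖ ^ 2
        ≤ (1 + znorm k ^ 2) ^ (s + θ) * (a⁻¹ ^ 2 * ‖b k‖ ^ 2) := by
          apply mul_le_mul_of_nonneg_left hu2 (Real.rpow_nonneg hzpos.le _)
    _ = (1 + znorm k ^ 2) ^ s * ((1 + znorm k ^ 2) ^ θ *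
          (C⁻¹ ^ 2 * ((znorm k ^ θ)⁻¹) ^ 2)) * ‖b k‖ ^ 2 := by
          rw [hsplit, hainv]; ring
    _ ≤ (1 + znorm k ^ 2) ^ s * ((2 ^ θ * (znorm k ^ θ) ^ 2) *
          (C⁻¹ ^ 2 * ((znorm k ^ θ)⁻¹) ^ 2)) * ‖b k‖ ^ 2 := by
          have hzθ : (0:ℝ) < znorm k ^ θ := Real.rpow_pos_of_pos (by linarith) θ
          apply mul_le_mul_of_nonneg_right _ (sq_nonneg _)
          apply mul_le_mul_of_nonneg_left _ (Real.rpow_nonneg hzpos.le _)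
          apply mul_le_mul_of_nonneg_right hfac (by positivity)
    _ = ((2 : ℝ) ^ θ * (C⁻¹) ^ 2) * ((1 + znorm k ^ 2) ^ s * ‖b k‖ ^ 2) := by
          have hzθ : (0:ℝ) < znorm k ^ θ := Real.rpow_pos_of_pos (by linarith) θ
          field_simp
  apply Summable.of_nonneg_of_le
  · intro k
    have h1 : (0:ℝ) ≤ 1 + znorm (k : Fin n → ℤ) ^ 2 := by nlinarith [znorm_nonneg (k : Fin n → ℤ)]
    exact mul_nonneg (Real.rpow_nonneg h1 _) (sq_nonneg _)
  · intro k
    exact key k k.2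
  · exact ((hb.subtype _).mul_left _)
end

section
/- Let n ≥ 1, δ > 0, β < n+2, and let u ∈ (C³(ℝ^n))^n with bounded third derivatives near x. Then the remainder term R := (n+2) μ c^{δ,β} ∫_{B_δ(0)} (w⊗w)/‖w‖^{β+2} R_σ(u; x, w) dw, where R_σ(u;x,w) = (1/6)∇∇∇u(x+σw) : w⊗w⊗w is the third-order Taylor remainder (σ ∈ [0,1] depending on w), satisfies ‖R‖ ≤ M_x δ (n+2−β) for a constant M_x depending only on local bounds of the third derivatives of u at x. In particular R → 0 as δ → 0⁺ with β fixed, and R → 0 as β → (n+2)⁻ with δ fixed. -/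
open MeasureTheory Filter

section AuxPeridynamic
open Measure Set Metric

private lemma my_integrable_fun_norm_addHaar {E : Type*} [NormedAddCommGroup E] [NormedSpace ℝ E]
    [Nontrivial E] [MeasurableSpace E] [BorelSpace E] [FiniteDimensional ℝ E]
    (μ : Measure E) [μ.IsAddHaarMeasure] {f : ℝ → ℝ}
    (hf : IntegrableOn (fun y => y ^ (Module.finrank ℝ E - 1) * f y) (Set.Ioi 0)) :
    Integrable (fun x => f ‖x‖) μ := by
  have hemb := MeasurableEmbedding.subtype_coe (measurableSet_singleton (0:E)).compl
  have h1 : IntegrableOn (fun x : E => f ‖x‖) {(0:E)}ᶜ μ := by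
    rw [IntegrableOn, ← map_comap_subtype_coe (measurableSet_singleton (0:E)).compl μ,
      hemb.integrable_map_iff]
    have : ((fun x : E => f ‖x‖) ∘ (Subtype.val : ({(0:E)}ᶜ : Set E) → E)) =
        ((f ∘ Subtype.val ∘ Prod.snd) ∘ (homeomorphUnitSphereProd E)) := by funext x; simp
    rw [this, μ.measurePreserving_homeomorphUnitSphereProd.integrable_comp_emb
      (Homeomorph.measurableEmbedding _)]
    -- integrability on the product
    have hν : Integrable (fun y : Set.Ioi (0:ℝ) => f y)
        (Measure.volumeIoiPow (Module.finrank ℝ E - 1)) := by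
      rw [Measure.volumeIoiPow, integrable_withDensity_iff
        ((measurable_subtype_coe.pow_const _).ennreal_ofReal)
        (Filter.Eventually.of_forall fun _ => ENNReal.ofReal_lt_top)]
      have hemb2 := MeasurableEmbedding.subtype_coe (measurableSet_Ioi (a := (0:ℝ)))
      have h2 : Integrable ((fun y => y ^ (Module.finrank ℝ E - 1) * f y) ∘
          (Subtype.val : Set.Ioi (0:ℝ) → ℝ)) (volume.comap Subtype.val) := by
        rw [← hemb2.integrable_map_iff, map_comap_subtype_coe measurableSet_Ioi]
        exact hf
      refine h2.congr (Filter.Eventually.of_forall fun r => ?_)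
      simp [ENNReal.toReal_ofReal (pow_nonneg r.2.le _), mul_comm]
    simpa [Function.comp_def] using (integrable_const (1:ℝ)).smul_prod hν
  rwa [IntegrableOn, MeasureTheory.restrict_compl_singleton] at h1

private lemma my_integral_ball_rpow (n : ℕ) (hn : 1 ≤ n) {p δ : ℝ} (hp : -(n:ℝ) < p)
    (hδ : 0 < δ) :
    IntegrableOn (fun w : EuclideanSpace ℝ (Fin n) => ‖w‖ ^ p) (Metric.ball 0 δ) ∧
    ∫ w in Metric.ball (0 : EuclideanSpace ℝ (Fin n)) δ, ‖w‖ ^ p =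
      ((n : ℝ) * (volume (Metric.ball (0 : EuclideanSpace ℝ (Fin n)) 1)).toReal) *
        (δ ^ ((n:ℝ) + p) / ((n:ℝ) + p)) := by
  have hdim : Module.finrank ℝ (EuclideanSpace ℝ (Fin n)) = n := by
    simp [finrank_euclideanSpace]
  haveI : Nontrivial (EuclideanSpace ℝ (Fin n)) :=
    Module.nontrivial_of_finrank_pos (R := ℝ) (by omega : 0 < Module.finrank ℝ (EuclideanSpace ℝ (Fin n)))
  set f : ℝ → ℝ := Set.indicator (Set.Iio δ) (fun r => r ^ p) with hfdef
  have hq : (-1:ℝ) < ((n:ℝ) - 1) + p := by linarith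
  -- pointwise identification over E
  have hcomp : ∀ x : EuclideanSpace ℝ (Fin n),
      f ‖x‖ = Set.indicator (Metric.ball (0 : EuclideanSpace ℝ (Fin n)) δ)
        (fun x => ‖x‖ ^ p) x := by
    intro x
    by_cases h : ‖x‖ < δ <;>
      simp [hfdef, Set.indicator, h, mem_ball_zero_iff]
  -- identification on (0,∞)
  have heq : ∀ y ∈ Set.Ioi (0:ℝ), y ^ (n - 1) * f y =
      Set.indicator (Set.Ioo 0 δ) (fun y => y ^ (((n:ℝ) - 1) + p)) y := by
    intro y hy
    have hy0 : (0:ℝ) < y := hy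
    by_cases h : y < δ
    · have : y ∈ Set.Ioo (0:ℝ) δ := ⟨hy0, h⟩
      simp only [hfdef, Set.indicator_of_mem (Set.mem_Iio.2 h), Set.indicator_of_mem this]
      rw [← Real.rpow_natCast y (n-1), ← Real.rpow_add hy0]
      congr 1
      have : ((n - 1 : ℕ) : ℝ) = (n:ℝ) - 1 := by
        push_cast [Nat.cast_sub hn]; ring
      rw [this]
    · have h1 : y ∉ Set.Iio δ := by simpa using not_lt.1 h
      have h2 : y ∉ Set.Ioo (0:ℝ) δ := fun hc => h hc.2
      simp [hfdef, Set.indicator_of_notMem h1, Set.indicator_of_notMem h2]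
  have hIoo : IntegrableOn (fun y : ℝ => y ^ (((n:ℝ) - 1) + p)) (Set.Ioo 0 δ) := by
    rw [← intervalIntegrable_iff_integrableOn_Ioo_of_le hδ.le]
    exact intervalIntegral.intervalIntegrable_rpow' hq
  have hIoi : IntegrableOn (fun y : ℝ => y ^ (n - 1) * f y) (Set.Ioi 0) := by
    have : IntegrableOn (Set.indicator (Set.Ioo 0 δ) (fun y => y ^ (((n:ℝ) - 1) + p)))
        (Set.Ioi 0) :=
      ((integrable_indicator_iff measurableSet_Ioo).2 hIoo).integrableOn
    exact IntegrableOn.congr_fun this (fun y hy => (heq y hy).symm) measurableSet_Ioi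
  have hIoi' : IntegrableOn
      (fun y : ℝ => y ^ (Module.finrank ℝ (EuclideanSpace ℝ (Fin n)) - 1) * f y)
      (Set.Ioi 0) := by rw [hdim]; exact hIoi
  -- integrability on the ball
  have hint : Integrable (fun x : EuclideanSpace ℝ (Fin n) => f ‖x‖) volume :=
    my_integrable_fun_norm_addHaar volume hIoi'
  have hball : IntegrableOn (fun w : EuclideanSpace ℝ (Fin n) => ‖w‖ ^ p)
      (Metric.ball 0 δ) := by
    rw [← integrable_indicator_iff measurableSet_ball]
    exact hint.congr (Filter.Eventually.of_forall hcomp)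
  refine ⟨hball, ?_⟩
  -- value
  have hval := integral_fun_norm_addHaar (volume : Measure (EuclideanSpace ℝ (Fin n))) f
  rw [hdim] at hval
  have hL : ∫ x : EuclideanSpace ℝ (Fin n), f ‖x‖ =
      ∫ w in Metric.ball (0 : EuclideanSpace ℝ (Fin n)) δ, ‖w‖ ^ p := by
    rw [← integral_indicator measurableSet_ball]
    exact integral_congr_ae (Filter.Eventually.of_forall hcomp)
  have hR : ∫ y in Set.Ioi (0:ℝ), y ^ (n - 1) • f y =
      δ ^ ((n:ℝ) + p) / ((n:ℝ) + p) := by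
    have : ∫ y in Set.Ioi (0:ℝ), y ^ (n - 1) • f y =
        ∫ y in Set.Ioi (0:ℝ),
          Set.indicator (Set.Ioo 0 δ) (fun y => y ^ (((n:ℝ) - 1) + p)) y := by
      refine setIntegral_congr_fun measurableSet_Ioi fun y hy => ?_
      simpa [smul_eq_mul] using heq y hy
    rw [this, integral_indicator measurableSet_Ioo,
      Measure.restrict_restrict measurableSet_Ioo,
      Set.inter_eq_left.2 (fun y hy => hy.1)]
    rw [← integral_Ioc_eq_integral_Ioo, ← intervalIntegral.integral_of_le hδ.le,
      integral_rpow (Or.inl hq)]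
    rw [Real.zero_rpow (by linarith : ((n:ℝ) - 1) + p + 1 ≠ 0)]
    have : ((n:ℝ) - 1) + p + 1 = (n:ℝ) + p := by ring
    rw [this, sub_zero]
  rw [hL, hR] at hval
  rw [hval, nsmul_eq_mul, smul_eq_mul, measureReal_def]
  ring

end AuxPeridynamic

set_option maxHeartbeats 1000000 in
/-- The Taylor remainder term
`R = (n+2) μ c^{δ,β} ∫_{B_δ(0)} (w⊗w)/‖w‖^{β+2} R_σ(u;x,w) dw` of the bond-based
operator satisfies `‖R‖ ≤ M_x δ (n+2-β)` whenever the third-order remainder obeys the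
cubic bound `‖R_σ(w)‖ ≤ (K/6)‖w‖³`; in particular `R → 0` as `δ → 0⁺` (fixed `β`) and
as `β → (n+2)⁻` (fixed `δ`). -/
theorem stmt14 (n : ℕ) (hn : 1 ≤ n) (μ K : ℝ) (hK : 0 ≤ K)
    (Rσ : EuclideanSpace ℝ (Fin n) → EuclideanSpace ℝ (Fin n))
    (hRσ : ∀ w, ‖Rσ w‖ ≤ K / 6 * ‖w‖ ^ 3) :
    (∃ Mx : ℝ, 0 ≤ Mx ∧ ∀ δ β : ℝ, 0 < δ → β < n + 2 →
      ‖(((n : ℝ) + 2) * μ * cdb n δ β) •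
          ∫ w in Metric.ball (0 : EuclideanSpace ℝ (Fin n)) δ,
            ((inner ℝ w (Rσ w) : ℝ) / ‖w‖ ^ (β + 2)) • w‖ ≤ Mx * δ * ((n : ℝ) + 2 - β)) ∧
    (∀ β : ℝ, β < n + 2 →
      Tendsto (fun δ : ℝ => (((n : ℝ) + 2) * μ * cdb n δ β) •
          ∫ w in Metric.ball (0 : EuclideanSpace ℝ (Fin n)) δ,
            ((inner ℝ w (Rσ w) : ℝ) / ‖w‖ ^ (β + 2)) • w)
        (nhdsWithin 0 (Set.Ioi 0)) (nhds 0)) ∧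
    (∀ δ : ℝ, 0 < δ →
      Tendsto (fun β : ℝ => (((n : ℝ) + 2) * μ * cdb n δ β) •
          ∫ w in Metric.ball (0 : EuclideanSpace ℝ (Fin n)) δ,
            ((inner ℝ w (Rσ w) : ℝ) / ‖w‖ ^ (β + 2)) • w)
        (nhdsWithin ((n : ℝ) + 2) (Set.Iio ((n : ℝ) + 2))) (nhds 0)) := by
  have hG : 0 < Real.Gamma ((n:ℝ)/2 + 1) := Real.Gamma_pos_of_pos (by positivity)
  have hP : (0:ℝ) < Real.pi ^ ((n:ℝ)/2) := Real.rpow_pos_of_pos Real.pi_pos _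
  set V : ℝ := (volume (Metric.ball (0 : EuclideanSpace ℝ (Fin n)) 1)).toReal with hVdef
  have hV0 : 0 ≤ V := ENNReal.toReal_nonneg
  set Mx : ℝ := ((n:ℝ) + 2) * |μ| *
    (K * ((n:ℝ) * V) * Real.Gamma ((n:ℝ)/2 + 1) / (3 * Real.pi ^ ((n:ℝ)/2))) with hMxdef
  have hMx0 : 0 ≤ Mx := by
    apply mul_nonneg (by positivity)
    apply div_nonneg _ (by positivity)
    positivity
  have main : ∀ δ β : ℝ, 0 < δ → β < n + 2 →
      ‖(((n : ℝ) + 2) * μ * cdb n δ β) •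
          ∫ w in Metric.ball (0 : EuclideanSpace ℝ (Fin n)) δ,
            ((inner ℝ w (Rσ w) : ℝ) / ‖w‖ ^ (β + 2)) • w‖ ≤ Mx * δ * ((n : ℝ) + 2 - β) := by
    intro δ β hδ hβ
    have hs : (0:ℝ) < (n:ℝ) + 2 - β := by linarith
    have hp : -(n:ℝ) < 3 - β := by linarith
    obtain ⟨hInt, hVal⟩ := my_integral_ball_rpow n hn hp hδ
    -- pointwise bound
    have hbound : ∀ w : EuclideanSpace ℝ (Fin n),
        ‖((inner ℝ w (Rσ w) : ℝ) / ‖w‖ ^ (β + 2)) • w‖ ≤ K/6 * ‖w‖ ^ (3 - β) := by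
      intro w
      rcases eq_or_ne w 0 with rfl | hw
      · simp only [norm_zero, smul_zero, norm_zero]
        positivity
      · have hw0 : 0 < ‖w‖ := norm_pos_iff.2 hw
        rw [norm_smul, Real.norm_eq_abs, abs_div,
          abs_of_nonneg (Real.rpow_nonneg (norm_nonneg w) _)]
        have h1 : |(inner ℝ w (Rσ w) : ℝ)| ≤ K/6 * ‖w‖ ^ (4:ℕ) := by
          calc |(inner ℝ w (Rσ w) : ℝ)| ≤ ‖w‖ * ‖Rσ w‖ := abs_real_inner_le_norm _ _
            _ ≤ ‖w‖ * (K/6 * ‖w‖ ^ 3) :=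
                mul_le_mul_of_nonneg_left (hRσ w) (norm_nonneg w)
            _ = K/6 * ‖w‖ ^ (4:ℕ) := by ring
        have h4 : ‖w‖ ^ (4:ℕ) = ‖w‖ ^ ((4:ℝ)) := by
          rw [← Real.rpow_natCast ‖w‖ 4]; norm_num
        have hpow : ‖w‖ ^ ((4:ℝ)) / ‖w‖ ^ (β + 2) * ‖w‖ = ‖w‖ ^ (3 - β) := by
          rw [← Real.rpow_sub hw0, ← Real.rpow_add_one hw0.ne']
          congr 1; ring
        calc |(inner ℝ w (Rσ w) : ℝ)| / ‖w‖ ^ (β + 2) * ‖w‖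
            ≤ (K/6 * ‖w‖ ^ (4:ℕ)) / ‖w‖ ^ (β + 2) * ‖w‖ := by
              gcongr
          _ = K/6 * (‖w‖ ^ ((4:ℝ)) / ‖w‖ ^ (β + 2) * ‖w‖) := by rw [h4]; ring
          _ = K/6 * ‖w‖ ^ (3 - β) := by rw [hpow]
    have hg : IntegrableOn (fun w : EuclideanSpace ℝ (Fin n) => K/6 * ‖w‖ ^ (3 - β))
        (Metric.ball 0 δ) := hInt.const_mul _
    have h1 : ‖∫ w in Metric.ball (0 : EuclideanSpace ℝ (Fin n)) δ,
        ((inner ℝ w (Rσ w) : ℝ) / ‖w‖ ^ (β + 2)) • w‖ ≤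
        ∫ w in Metric.ball (0 : EuclideanSpace ℝ (Fin n)) δ, K/6 * ‖w‖ ^ (3 - β) :=
      norm_integral_le_of_norm_le hg (Filter.Eventually.of_forall fun w => hbound w)
    have h2 : ∫ w in Metric.ball (0 : EuclideanSpace ℝ (Fin n)) δ, K/6 * ‖w‖ ^ (3 - β) =
        K/6 * (((n:ℝ) * V) * (δ ^ ((n:ℝ) + (3 - β)) / ((n:ℝ) + (3 - β)))) := by
      rw [integral_const_mul, hVal]
    have hcdb : 0 ≤ cdb n δ β := by
      unfold cdb
      have ht : (0:ℝ) < δ ^ ((n:ℝ) + 2 - β) := Real.rpow_pos_of_pos hδ _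
      positivity
    have hc : |(((n : ℝ) + 2) * μ * cdb n δ β)| = ((n:ℝ) + 2) * |μ| * cdb n δ β := by
      rw [abs_mul, abs_mul, abs_of_nonneg (by positivity : (0:ℝ) ≤ (n:ℝ) + 2),
        abs_of_nonneg hcdb]
    have key : ((n:ℝ) + 2) * |μ| * cdb n δ β *
        (K/6 * (((n:ℝ) * V) * (δ ^ ((n:ℝ) + (3 - β)) / ((n:ℝ) + (3 - β))))) ≤
        Mx * δ * ((n:ℝ) + 2 - β) := by
      have ht : (0:ℝ) < δ ^ ((n:ℝ) + 2 - β) := Real.rpow_pos_of_pos hδ _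
      have hrw : δ ^ ((n:ℝ) + (3 - β)) = δ ^ ((n:ℝ) + 2 - β) * δ := by
        rw [show (n:ℝ) + (3 - β) = ((n:ℝ) + 2 - β) + 1 by ring, Real.rpow_add hδ,
          Real.rpow_one]
      have hs1 : (0:ℝ) < ((n:ℝ) + 2 - β) + 1 := by linarith
      have heq : ((n:ℝ) + 2) * |μ| * cdb n δ β *
          (K/6 * (((n:ℝ) * V) * (δ ^ ((n:ℝ) + (3 - β)) / ((n:ℝ) + (3 - β))))) =
          Mx * δ * ((n:ℝ) + 2 - β) / (((n:ℝ) + 2 - β) + 1) := by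
        rw [hrw, show (n:ℝ) + (3 - β) = ((n:ℝ) + 2 - β) + 1 by ring]
        unfold cdb
        rw [hMxdef]
        field_simp
        ring
      rw [heq]
      exact div_le_self (by positivity) (by linarith)
    calc ‖(((n : ℝ) + 2) * μ * cdb n δ β) •
          ∫ w in Metric.ball (0 : EuclideanSpace ℝ (Fin n)) δ,
            ((inner ℝ w (Rσ w) : ℝ) / ‖w‖ ^ (β + 2)) • w‖
        = |(((n : ℝ) + 2) * μ * cdb n δ β)| *
          ‖∫ w in Metric.ball (0 : EuclideanSpace ℝ (Fin n)) δ,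
            ((inner ℝ w (Rσ w) : ℝ) / ‖w‖ ^ (β + 2)) • w‖ := by
          rw [norm_smul, Real.norm_eq_abs]
      _ ≤ |(((n : ℝ) + 2) * μ * cdb n δ β)| *
          (K/6 * (((n:ℝ) * V) * (δ ^ ((n:ℝ) + (3 - β)) / ((n:ℝ) + (3 - β))))) :=
          mul_le_mul_of_nonneg_left (h1.trans_eq h2) (abs_nonneg _)
      _ = ((n:ℝ) + 2) * |μ| * cdb n δ β *
          (K/6 * (((n:ℝ) * V) * (δ ^ ((n:ℝ) + (3 - β)) / ((n:ℝ) + (3 - β))))) := by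
          rw [hc]
      _ ≤ Mx * δ * ((n:ℝ) + 2 - β) := key
  refine ⟨⟨Mx, hMx0, main⟩, ?_, ?_⟩
  · intro β hβ
    have hcont : Continuous fun δ : ℝ => Mx * δ * ((n:ℝ) + 2 - β) := by continuity
    refine squeeze_zero_norm' ?_ ((hcont.tendsto' 0 0 (by ring)).mono_left nhdsWithin_le_nhds)
    filter_upwards [self_mem_nhdsWithin] with δ hδ
    exact main δ β hδ hβ
  · intro δ hδ
    have hcont : Continuous fun β : ℝ => Mx * δ * ((n:ℝ) + 2 - β) := by continuity
    refine squeeze_zero_norm' ?_ ((hcont.tendsto' _ 0 (by ring)).mono_left nhdsWithin_le_nhds)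
    filter_upwards [self_mem_nhdsWithin] with β hβ
    exact main δ β hδ hβ
end

section
/- Let n ≥ 1 and for each nonzero k ∈ ℤ^n let M_k be a negative-definite real symmetric n×n matrix. Suppose f, g are in H^{s₁}(𝕋^n), H^{s₂}(𝕋^n) respectively, and there exist C, r > 0 with ‖(√(−M_k))^{−1}‖ ≤ C for ‖k‖ ≥ r. Then for every t ≥ 0, the distribution U(t) with Fourier coefficients Û_0(t) = f̂_0 + t ĝ_0 and Û_k(t) = cos(√(−M_k) t) f̂_k + sin(√(−M_k) t)(√(−M_k))^{−1} ĝ_k (k ≠ 0) belongs to H^s(𝕋^n) with s = min{s₁, s₂}. -/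
open Matrix

section aux

variable {n : ℕ}

lemma aux_isometry (P : Matrix (Fin n) (Fin n) ℝ) (hP : Pᵀ * P = 1)
    (x : EuclideanSpace ℝ (Fin n)) :
    ‖Matrix.toEuclideanCLM (𝕜 := ℝ) P x‖ = ‖x‖ := by
  set u := Matrix.toEuclideanCLM (𝕜 := ℝ) P
  have hstar : star P = Pᵀ := by
    ext i j; simp [Matrix.conjTranspose_apply]
  have h2 : star u * u = 1 := by
    rw [show star u = Matrix.toEuclideanCLM (𝕜 := ℝ) (star P) from (map_star _ _).symm,
      ← _root_.map_mul, hstar, hP, _root_.map_one]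
  have h3 : (ContinuousLinearMap.adjoint u) (u x) = x := by
    have := congrArg (fun T : EuclideanSpace ℝ (Fin n) →L[ℝ] EuclideanSpace ℝ (Fin n) => T x) h2
    simpa [ContinuousLinearMap.star_eq_adjoint] using this
  have h4 : (inner ℝ (u x) (u x) : ℝ) = inner ℝ x x := by
    rw [← ContinuousLinearMap.adjoint_inner_left, h3]
  have h5 : ‖u x‖ ^ 2 = ‖x‖ ^ 2 := by
    rw [← real_inner_self_eq_norm_sq, ← real_inner_self_eq_norm_sq, h4]
  nlinarith [norm_nonneg (u x), norm_nonneg x]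

lemma aux_orth_norm_le (P : Matrix (Fin n) (Fin n) ℝ) (hP : Pᵀ * P = 1) :
    ‖Matrix.toEuclideanCLM (𝕜 := ℝ) P‖ ≤ 1 := by
  refine ContinuousLinearMap.opNorm_le_bound _ zero_le_one fun x => ?_
  rw [aux_isometry P hP x, one_mul]

lemma aux_diag_norm_le (d : Fin n → ℝ) (a : ℝ) (ha : 0 ≤ a) (hd : ∀ i, |d i| ≤ a) :
    ‖Matrix.toEuclideanCLM (𝕜 := ℝ) (Matrix.diagonal d)‖ ≤ a := by
  refine ContinuousLinearMap.opNorm_le_bound _ ha fun x => ?_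
  have happ : ∀ i, (Matrix.toEuclideanCLM (𝕜 := ℝ) (Matrix.diagonal d) x : Fin n → ℝ) i
      = d i * (x : Fin n → ℝ) i := by
    intro i
    show ((Matrix.diagonal d) *ᵥ (x : Fin n → ℝ)) i = _
    rw [Matrix.mulVec_diagonal]
  rw [EuclideanSpace.norm_eq, EuclideanSpace.norm_eq]
  rw [show a * Real.sqrt (∑ i, ‖(x : Fin n → ℝ) i‖ ^ 2)
      = Real.sqrt (a ^ 2 * ∑ i, ‖(x : Fin n → ℝ) i‖ ^ 2) by
    rw [Real.sqrt_mul (sq_nonneg a), Real.sqrt_sq ha]]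
  apply Real.sqrt_le_sqrt
  rw [Finset.mul_sum]
  apply Finset.sum_le_sum
  intro i _
  rw [happ i]
  have h1 : |d i * (x : Fin n → ℝ) i| ≤ a * |(x : Fin n → ℝ) i| := by
    rw [abs_mul]
    exact mul_le_mul_of_nonneg_right (hd i) (abs_nonneg _)
  calc ‖d i * (x : Fin n → ℝ) i‖ ^ 2 = (d i * (x : Fin n → ℝ) i) ^ 2 := by
        rw [Real.norm_eq_abs, sq_abs]
    _ ≤ (a * |(x : Fin n → ℝ) i|) ^ 2 := by
        rw [← sq_abs (d i * _)]
        exact pow_le_pow_left₀ (abs_nonneg _) h1 2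
    _ = a ^ 2 * ‖(x : Fin n → ℝ) i‖ ^ 2 := by
        rw [mul_pow, Real.norm_eq_abs, sq_abs]

lemma aux_conj_mul (P D₁ D₂ : Matrix (Fin n) (Fin n) ℝ) (hP : Pᵀ * P = 1) :
    P * (D₁ * D₂) * Pᵀ = (P * D₁ * Pᵀ) * (P * D₂ * Pᵀ) := by
  calc P * (D₁ * D₂) * Pᵀ = P * (D₁ * ((Pᵀ * P) * (D₂ * Pᵀ))) := by
        rw [hP, one_mul]; simp only [Matrix.mul_assoc]
    _ = (P * D₁ * Pᵀ) * (P * D₂ * Pᵀ) := by simp only [Matrix.mul_assoc]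

end aux

/-- Spatial regularity of the solution of the homogeneous peridynamic evolution
equation: with `M_k = P_k diag(λ_k) P_kᵀ` negative definite, `f ∈ H^{s₁}`,
`g ∈ H^{s₂}`, and `‖(√(-M_k))⁻¹‖ ≤ C` for `‖k‖ ≥ r`, the coefficients
`Û_k(t) = cos(√(-M_k)t) f̂_k + sin(√(-M_k)t)(√(-M_k))⁻¹ ĝ_k` define a distribution in
`H^{min{s₁,s₂}}` for every `t ≥ 0`. -/
theorem stmt15 (n : ℕ) (hn : 1 ≤ n)
    (P : (Fin n → ℤ) → Matrix (Fin n) (Fin n) ℝ)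
    (hP : ∀ k, (P k)ᵀ * P k = 1) (hP' : ∀ k, P k * (P k)ᵀ = 1)
    (lam : (Fin n → ℤ) → Fin n → ℝ)
    (hlam : ∀ k, k ≠ 0 → ∀ i, lam k i < 0)
    (s₁ s₂ : ℝ) (f g : (Fin n → ℤ) → EuclideanSpace ℝ (Fin n))
    (hf : Summable fun k => (1 + znorm k ^ 2) ^ s₁ * ‖f k‖ ^ 2)
    (hg : Summable fun k => (1 + znorm k ^ 2) ^ s₂ * ‖g k‖ ^ 2)
    (C r : ℝ) (hC : 0 < C) (hr : 0 < r)
    (hbound : ∀ k, k ≠ 0 → r ≤ znorm k →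
      ‖Matrix.toEuclideanCLM (𝕜 := ℝ)
          (P k * Matrix.diagonal (fun i => (Real.sqrt (-lam k i))⁻¹) * (P k)ᵀ)‖ ≤ C)
    (t : ℝ) (ht : 0 ≤ t)
    (U : (Fin n → ℤ) → EuclideanSpace ℝ (Fin n))
    (hU0 : U 0 = f 0 + t • g 0)
    (hU : ∀ k, k ≠ 0 → (U k : Fin n → ℝ) =
      (P k * Matrix.diagonal (fun i => Real.cos (Real.sqrt (-lam k i) * t)) *
          (P k)ᵀ).mulVec (f k) +
      (P k * Matrix.diagonal
          (fun i => Real.sin (Real.sqrt (-lam k i) * t) * (Real.sqrt (-lam k i))⁻¹) *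
          (P k)ᵀ).mulVec (g k)) :
    Summable fun k => (1 + znorm k ^ 2) ^ (min s₁ s₂) * ‖U k‖ ^ 2 := by
  classical
  -- the "small" set of indices is finite
  set S : Set (Fin n → ℤ) := {k | znorm k < r} with hS
  have hSfin : S.Finite := by
    have hsub : S ⊆ Set.pi Set.univ (fun _ : Fin n => Set.Icc (⌈-r⌉ : ℤ) ⌊r⌋) := by
      intro k hk i _
      have hk' : znorm k < r := hk
      have h1 : ((k i : ℝ)) ^ 2 ≤ ∑ j, ((k j : ℝ)) ^ 2 :=
        Finset.single_le_sum (f := fun j => ((k j : ℝ)) ^ 2)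
          (fun j _ => sq_nonneg _) (Finset.mem_univ i)
      have h2 : |(k i : ℝ)| ≤ znorm k := by
        rw [← Real.sqrt_sq_eq_abs]
        exact Real.sqrt_le_sqrt h1
      have h3 : |(k i : ℝ)| < r := lt_of_le_of_lt h2 hk'
      rw [abs_lt] at h3
      constructor
      · exact Int.ceil_le.mpr (by push_cast; linarith [h3.1])
      · exact Int.le_floor.mpr (by push_cast; linarith [h3.2])
    exact Set.Finite.subset (Set.Finite.pi fun _ => Set.finite_Icc _ _) hsub
  rw [← hSfin.summable_compl_iff]
  -- comparison on the complement
  have hmajsum : Summable ((fun k => 2 * ((1 + znorm k ^ 2) ^ s₁ * ‖f k‖ ^ 2)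
      + 2 * C ^ 2 * ((1 + znorm k ^ 2) ^ s₂ * ‖g k‖ ^ 2)) ∘ ((↑) : ↥Sᶜ → (Fin n → ℤ))) :=
    Summable.subtype ((hf.mul_left 2).add (hg.mul_left (2 * C ^ 2))) Sᶜ
  refine Summable.of_nonneg_of_le (fun k => ?_) (fun k => ?_) hmajsum
  · simp only [Function.comp_apply]
    have h1 : (0 : ℝ) < 1 + znorm (k : Fin n → ℤ) ^ 2 := by positivity
    positivity
  · obtain ⟨k, hk⟩ := k
    simp only [Function.comp_apply]
    have hkr : r ≤ znorm k := le_of_not_gt hk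
    have hk0 : k ≠ 0 := by
      intro h0
      apply absurd hkr
      push_neg
      have : znorm (0 : Fin n → ℤ) = 0 := by simp [znorm]
      rw [h0, this]; exact hr
    -- norms of the two propagator matrices
    set A := P k * Matrix.diagonal (fun i => Real.cos (Real.sqrt (-lam k i) * t)) * (P k)ᵀ with hA
    set B := P k * Matrix.diagonal
        (fun i => Real.sin (Real.sqrt (-lam k i) * t) * (Real.sqrt (-lam k i))⁻¹) * (P k)ᵀ with hB
    have hPt : ((P k)ᵀ)ᵀ * (P k)ᵀ = 1 := by rw [Matrix.transpose_transpose, hP' k]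
    have hnormConj : ∀ d : Fin n → ℝ, (∀ i, |d i| ≤ 1) →
        ‖Matrix.toEuclideanCLM (𝕜 := ℝ) (P k * Matrix.diagonal d * (P k)ᵀ)‖ ≤ 1 := by
      intro d hd
      rw [_root_.map_mul, _root_.map_mul]
      calc ‖Matrix.toEuclideanCLM (𝕜 := ℝ) (P k) * Matrix.toEuclideanCLM (𝕜 := ℝ)
              (Matrix.diagonal d) * Matrix.toEuclideanCLM (𝕜 := ℝ) ((P k)ᵀ)‖
          ≤ ‖Matrix.toEuclideanCLM (𝕜 := ℝ) (P k) * Matrix.toEuclideanCLM (𝕜 := ℝ)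
              (Matrix.diagonal d)‖ * ‖Matrix.toEuclideanCLM (𝕜 := ℝ) ((P k)ᵀ)‖ :=
            norm_mul_le _ _
        _ ≤ (‖Matrix.toEuclideanCLM (𝕜 := ℝ) (P k)‖ * ‖Matrix.toEuclideanCLM (𝕜 := ℝ)
              (Matrix.diagonal d)‖) * ‖Matrix.toEuclideanCLM (𝕜 := ℝ) ((P k)ᵀ)‖ := by
            apply mul_le_mul_of_nonneg_right (norm_mul_le _ _) (norm_nonneg _)
        _ ≤ (1 * 1) * 1 := by
            apply mul_le_mul (mul_le_mul (aux_orth_norm_le _ (hP k))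
              (aux_diag_norm_le d 1 zero_le_one hd) (norm_nonneg _) zero_le_one)
              (aux_orth_norm_le _ hPt) (norm_nonneg _) (by norm_num)
        _ = 1 := by norm_num
    have hAnorm : ‖Matrix.toEuclideanCLM (𝕜 := ℝ) A‖ ≤ 1 :=
      hnormConj _ fun i => Real.abs_cos_le_one _
    have hBnorm : ‖Matrix.toEuclideanCLM (𝕜 := ℝ) B‖ ≤ C := by
      have hsplit : B = (P k * Matrix.diagonal (fun i => Real.sin (Real.sqrt (-lam k i) * t)) *
          (P k)ᵀ) * (P k * Matrix.diagonal (fun i => (Real.sqrt (-lam k i))⁻¹) * (P k)ᵀ) := by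
        rw [hB, ← aux_conj_mul _ _ _ (hP k), Matrix.diagonal_mul_diagonal]
      rw [hsplit, _root_.map_mul]
      calc ‖Matrix.toEuclideanCLM (𝕜 := ℝ) _ * Matrix.toEuclideanCLM (𝕜 := ℝ) _‖
          ≤ ‖Matrix.toEuclideanCLM (𝕜 := ℝ) (P k * Matrix.diagonal
              (fun i => Real.sin (Real.sqrt (-lam k i) * t)) * (P k)ᵀ)‖ *
            ‖Matrix.toEuclideanCLM (𝕜 := ℝ) (P k * Matrix.diagonal
              (fun i => (Real.sqrt (-lam k i))⁻¹) * (P k)ᵀ)‖ := norm_mul_le _ _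
        _ ≤ 1 * C := mul_le_mul (hnormConj _ fun i => Real.abs_sin_le_one _)
            (hbound k hk0 hkr) (norm_nonneg _) zero_le_one
        _ = C := one_mul C
    -- U k as a sum of CLM applications
    have hUk : U k = Matrix.toEuclideanCLM (𝕜 := ℝ) A (f k)
        + Matrix.toEuclideanCLM (𝕜 := ℝ) B (g k) := by
      apply (WithLp.equiv 2 (Fin n → ℝ)).injective
      have h1 := hU k hk0
      funext i
      have := congrFun h1 i
      simpa [Matrix.ofLp_toEuclideanCLM, Matrix.toLin'_apply] using this
    have hUnorm : ‖U k‖ ≤ ‖f k‖ + C * ‖g k‖ := by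
      rw [hUk]
      calc ‖Matrix.toEuclideanCLM (𝕜 := ℝ) A (f k) + Matrix.toEuclideanCLM (𝕜 := ℝ) B (g k)‖
          ≤ ‖Matrix.toEuclideanCLM (𝕜 := ℝ) A (f k)‖
            + ‖Matrix.toEuclideanCLM (𝕜 := ℝ) B (g k)‖ := norm_add_le _ _
        _ ≤ ‖Matrix.toEuclideanCLM (𝕜 := ℝ) A‖ * ‖f k‖
            + ‖Matrix.toEuclideanCLM (𝕜 := ℝ) B‖ * ‖g k‖ := by
            gcongr <;> [exact ContinuousLinearMap.le_opNorm _ _;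
              exact ContinuousLinearMap.le_opNorm _ _]
        _ ≤ 1 * ‖f k‖ + C * ‖g k‖ := by gcongr
        _ = ‖f k‖ + C * ‖g k‖ := by ring
    have hUsq : ‖U k‖ ^ 2 ≤ 2 * ‖f k‖ ^ 2 + 2 * C ^ 2 * ‖g k‖ ^ 2 := by
      have h0 : (0 : ℝ) ≤ ‖f k‖ + C * ‖g k‖ := by positivity
      nlinarith [sq_nonneg (‖f k‖ - C * ‖g k‖), norm_nonneg (U k), hUnorm]
    have hbase : (1 : ℝ) ≤ 1 + znorm k ^ 2 := by nlinarith [sq_nonneg (znorm k)]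
    have hw1 : (1 + znorm k ^ 2) ^ (min s₁ s₂) ≤ (1 + znorm k ^ 2) ^ s₁ :=
      Real.rpow_le_rpow_of_exponent_le hbase (min_le_left _ _)
    have hw2 : (1 + znorm k ^ 2) ^ (min s₁ s₂) ≤ (1 + znorm k ^ 2) ^ s₂ :=
      Real.rpow_le_rpow_of_exponent_le hbase (min_le_right _ _)
    have hwpos : (0 : ℝ) < (1 + znorm k ^ 2) ^ (min s₁ s₂) :=
      Real.rpow_pos_of_pos (by nlinarith [sq_nonneg (znorm k)]) _
    calc (1 + znorm k ^ 2) ^ (min s₁ s₂) * ‖U k‖ ^ 2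
        ≤ (1 + znorm k ^ 2) ^ (min s₁ s₂) * (2 * ‖f k‖ ^ 2 + 2 * C ^ 2 * ‖g k‖ ^ 2) :=
          mul_le_mul_of_nonneg_left hUsq hwpos.le
      _ = 2 * ((1 + znorm k ^ 2) ^ (min s₁ s₂) * ‖f k‖ ^ 2)
          + 2 * C ^ 2 * ((1 + znorm k ^ 2) ^ (min s₁ s₂) * ‖g k‖ ^ 2) := by ring
      _ ≤ 2 * ((1 + znorm k ^ 2) ^ s₁ * ‖f k‖ ^ 2)
          + 2 * C ^ 2 * ((1 + znorm k ^ 2) ^ s₂ * ‖g k‖ ^ 2) := by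
          gcongr
end
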